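/- arXiv:1607.06711 — 6 statements merged into one kernel-verified Lean document; each statement's English description precedes it below -/
import Mathlib

section
/- Let T : M_{n1}(ℂ) → M_{n2}(ℂ) be a completely positive operator and let T̃ : M_{n1·n2}(ℂ) → M_{n1·n2}(ℂ) be the operator obtained from T by the squaring construction. Then cap(T̃) = cap(T)^{n1}. -/
set_option linter.unusedSectionVars false
set_option maxHeartbeats 1000000

open Matrix BigOperators
open scoped ComplexOrder

/-- The capacity of an operator `T : M_I(ℂ) → M_J(ℂ)`:
`cap(T) = inf { det((|J|/|I|) • T(X)) : X positive definite, det X = 1 }`. -/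
noncomputable def capacity {I J : Type} [Fintype I] [DecidableEq I] [Fintype J] [DecidableEq J]
    (T : Matrix I I ℂ → Matrix J J ℂ) : ℝ :=
  sInf { r : ℝ | ∃ X : Matrix I I ℂ, X.PosDef ∧ X.det = 1 ∧
    r = ((((Fintype.card J : ℂ) / (Fintype.card I : ℂ)) • T X).det).re }

/-- The squaring construction: given `T : M_{n1}(ℂ) → M_{n2}(ℂ)`, view
`X ∈ M_{n1 n2}(ℂ)` as an `n2 × n2` block matrix with `n1 × n1` blocks `X_{i,j}`
and set `T̃(X) = I_{n1} ⊗ ((1/n1) • ∑ i, T (X_{i,i}))`. -/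
noncomputable def squareOp {n1 n2 : ℕ}
    (T : Matrix (Fin n1) (Fin n1) ℂ → Matrix (Fin n2) (Fin n2) ℂ)
    (X : Matrix (Fin n2 × Fin n1) (Fin n2 × Fin n1) ℂ) :
    Matrix (Fin n2 × Fin n1) (Fin n2 × Fin n1) ℂ :=
  Matrix.reindex (Equiv.prodComm (Fin n1) (Fin n2)) (Equiv.prodComm (Fin n1) (Fin n2))
    (Matrix.kroneckerMap (· * ·) (1 : Matrix (Fin n1) (Fin n1) ℂ)
      ((n1 : ℂ)⁻¹ • ∑ k : Fin n2, T (Matrix.of fun a b => X (k, a) (k, b))))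

namespace CapSq

variable {ι κ : Type*} [Fintype ι] [DecidableEq ι] [Fintype κ] [DecidableEq κ]

lemma trace_eq_sum_eigenvalues {A : Matrix ι ι ℂ} (hA : A.IsHermitian) :
    A.trace = ((∑ i, hA.eigenvalues i : ℝ) : ℂ) := by
  conv_lhs => rw [hA.spectral_theorem, Unitary.conjStarAlgAut_apply]
  rw [trace_mul_comm, ← Matrix.mul_assoc]
  have h1 : (star (hA.eigenvectorUnitary : Matrix ι ι ℂ)) *
      (hA.eigenvectorUnitary : Matrix ι ι ℂ) = 1 := by
    exact (Matrix.mem_unitaryGroup_iff').mp hA.eigenvectorUnitary.2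
  rw [h1, Matrix.one_mul, trace_diagonal]
  push_cast
  rfl

lemma posSemidef_det_re_nonneg {A : Matrix ι ι ℂ} (hA : A.PosSemidef) :
    A.det = ((A.det.re : ℝ) : ℂ) ∧ 0 ≤ A.det.re := by
  have h2 : A.det = ((∏ i, hA.isHermitian.eigenvalues i : ℝ) : ℂ) := by
    rw [hA.isHermitian.det_eq_prod_eigenvalues]; push_cast; rfl
  have h3 : 0 ≤ ∏ i, hA.isHermitian.eigenvalues i :=
    Finset.prod_nonneg fun i _ => hA.eigenvalues_nonneg i
  have h4 : A.det.re = ∏ i, hA.isHermitian.eigenvalues i := by rw [h2, Complex.ofReal_re]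
  constructor
  · rw [h4, ← h2]
  · rw [h4]; exact h3

lemma posDef_det_re_pos {A : Matrix ι ι ℂ} (hA : A.PosDef) :
    A.det = ((A.det.re : ℝ) : ℂ) ∧ 0 < A.det.re := by
  have h := hA.det_pos
  rw [Complex.lt_def] at h
  refine ⟨?_, by simpa using h.1⟩
  apply Complex.ext <;> simp [← h.2]

lemma amgm_det_trace {A : Matrix ι ι ℂ} [Nonempty ι] (hA : A.PosDef) :
    A.det.re ≤ (A.trace.re / (Fintype.card ι)) ^ (Fintype.card ι) := by
  set N := Fintype.card ι with hN
  have hN0 : (0:ℝ) < (N : ℝ) := by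
    have := Fintype.card_pos (α := ι); positivity
  set lam := hA.isHermitian.eigenvalues with hlam
  have hdet : A.det.re = ∏ i, lam i := by
    have h5 : A.det = ((∏ i, lam i : ℝ) : ℂ) := by
      rw [hA.isHermitian.det_eq_prod_eigenvalues]; push_cast; rfl
    rw [h5, Complex.ofReal_re]
  have htr : A.trace.re = ∑ i, lam i := by
    rw [trace_eq_sum_eigenvalues hA.isHermitian, Complex.ofReal_re]
  rw [hdet, htr]
  have hpos : ∀ i ∈ Finset.univ, (0:ℝ) ≤ lam i := fun i _ => (hA.eigenvalues_pos i).le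
  have key := Real.geom_mean_le_arith_mean_weighted Finset.univ (fun _ => 1 / N) lam
    (fun i _ => by positivity)
    (by simp [Finset.card_univ, ← hN, mul_one_div, div_self hN0.ne'])
    hpos
  have h1 : (∏ i, lam i ^ ((1:ℝ) / N)) ^ N = ∏ i, lam i := by
    rw [← Finset.prod_pow]
    apply Finset.prod_congr rfl
    intro i _
    rw [← Real.rpow_natCast (lam i ^ ((1:ℝ)/N)) N, ← Real.rpow_mul (hpos i (Finset.mem_univ i))]
    rw [one_div, inv_mul_cancel₀ hN0.ne', Real.rpow_one]
  have h2 : ∑ i, (1 / (N:ℝ)) * lam i = (∑ i, lam i) / N := by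
    rw [← Finset.mul_sum]; ring
  calc ∏ i, lam i = (∏ i, lam i ^ ((1:ℝ) / N)) ^ N := h1.symm
    _ ≤ ((∑ i, lam i) / N) ^ N := by
        apply pow_le_pow_left₀ (Finset.prod_nonneg fun i _ =>
          Real.rpow_nonneg (hpos i (Finset.mem_univ i)) _)
        rw [← h2]; exact key

lemma posDef_conj {M B : Matrix ι ι ℂ} (hM : M.PosDef) (hB : IsUnit B.det) :
    (Bᴴ * M * B).PosDef := by
  refine PosDef.of_dotProduct_mulVec_pos ?_ ?_
  · exact isHermitian_conjTranspose_mul_mul B hM.1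
  · intro x hx
    have hBx : B *ᵥ x ≠ 0 := by
      have hinj := (Matrix.mulVec_injective_iff_isUnit (A := B)).mpr
        ((Matrix.isUnit_iff_isUnit_det B).mpr hB)
      intro h
      apply hx
      have := hinj (a₁ := x) (a₂ := 0) (by simpa using h)
      simpa using this
    simpa only [star_mulVec, dotProduct_mulVec, vecMul_vecMul] using hM.dotProduct_mulVec_pos hBx

open scoped MatrixOrder in
lemma det_le_of_trace_inv_mul [Nonempty ι] {X W : Matrix ι ι ℂ}
    (hX : X.PosDef) (hW : W.PosDef)
    (htr : (W⁻¹ * X).trace = (Fintype.card ι : ℂ)) : X.det.re ≤ W.det.re := by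
  set S := CFC.sqrt W with hSdef
  have hS2 : S * S = W := CFC.sqrt_mul_sqrt_self W hW.posSemidef.nonneg
  have hSH : S.IsHermitian := (CFC.sqrt_nonneg W).posSemidef.isHermitian
  have hWdet : W.det ≠ 0 := hW.det_pos.ne'
  have hSdet : S.det ≠ 0 := by
    intro h
    apply hWdet
    rw [← hS2, det_mul, h, mul_zero]
  have hSunit : IsUnit S.det := hSdet.isUnit
  have hSinvH : (S⁻¹)ᴴ = S⁻¹ := by rw [conjTranspose_nonsing_inv, hSH.eq]
  set M := S⁻¹ * X * S⁻¹ with hMdef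
  have hMpd : M.PosDef := by
    have : IsUnit (S⁻¹).det := by
      rw [det_nonsing_inv, isUnit_ringInverse]; exact hSunit
    have h := posDef_conj hX this
    rwa [hSinvH] at h
  have hWinv : S⁻¹ * S⁻¹ = W⁻¹ := by rw [← hS2, Matrix.mul_inv_rev]
  have htrM : M.trace = (Fintype.card ι : ℂ) := by
    rw [hMdef, Matrix.mul_assoc, trace_mul_comm, Matrix.mul_assoc, hWinv,
      trace_mul_comm, htr]
  have hdetM : X.det = W.det * M.det := by
    have h1 : M.det = S⁻¹.det * X.det * S⁻¹.det := by rw [hMdef, det_mul, det_mul]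
    have h2 : S⁻¹.det = (S.det)⁻¹ := by rw [det_nonsing_inv, Ring.inverse_eq_inv']
    rw [h1, h2, ← hS2, det_mul]
    field_simp
  obtain ⟨hXr, hXpos⟩ := posDef_det_re_pos hX
  obtain ⟨hWr, hWpos⟩ := posDef_det_re_pos hW
  obtain ⟨hMr, hMpos⟩ := posDef_det_re_pos hMpd
  have hre : X.det.re = W.det.re * M.det.re := by
    have := hdetM
    rw [hXr, hWr, hMr, ← Complex.ofReal_mul] at this
    exact_mod_cast this
  have hM1 : M.det.re ≤ 1 := by
    have h := amgm_det_trace hMpd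
    have hNne : ((Fintype.card ι : ℝ)) ≠ 0 := by
      have := Fintype.card_pos (α := ι); positivity
    rw [htrM] at h
    simpa [Complex.natCast_re, div_self hNne] using h
  calc X.det.re = W.det.re * M.det.re := hre
    _ ≤ W.det.re * 1 := by exact mul_le_mul_of_nonneg_left hM1 hWpos.le
    _ = W.det.re := mul_one _

lemma posDef_submatrix_equiv {M : Matrix ι ι ℂ} (hM : M.PosDef) (e : κ ≃ ι) :
    (M.submatrix e e).PosDef := by
  refine PosDef.of_dotProduct_mulVec_pos ?_ ?_
  · exact hM.1.submatrix e
  · intro x hx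
    have hxe : (x ∘ e.symm) ≠ 0 := by
      intro h
      apply hx
      funext i
      have := congrFun h (e i)
      simpa using this
    have key : star x ⬝ᵥ ((M.submatrix e e) *ᵥ x)
        = star (x ∘ e.symm) ⬝ᵥ (M *ᵥ (x ∘ e.symm)) := by
      simp only [dotProduct, mulVec, submatrix_apply, Pi.star_apply, Function.comp]
      apply Fintype.sum_equiv e
      intro i
      simp only [Equiv.symm_apply_apply]
      congr 1
      apply Fintype.sum_equiv e
      intro j
      simp only [Equiv.symm_apply_apply]
    rw [key]
    exact hM.dotProduct_mulVec_pos hxe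

lemma posDef_blockDiagonal {M : Matrix ι ι ℂ} (hM : M.PosDef) :
    (blockDiagonal (fun _ : κ => M)).PosDef := by
  refine PosDef.of_dotProduct_mulVec_pos ?_ ?_
  · simp only [Matrix.IsHermitian, blockDiagonal_conjTranspose, hM.1.eq]
  · intro x hx
    have key : star x ⬝ᵥ (blockDiagonal (fun _ : κ => M) *ᵥ x)
        = ∑ k : κ, (star (fun i => x (i, k)) ⬝ᵥ (M *ᵥ fun i => x (i, k))) := by
      simp only [dotProduct, mulVec, blockDiagonal_apply, Pi.star_apply,
        Fintype.sum_prod_type, ite_mul, zero_mul, mul_ite, mul_zero]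
      simp only [Finset.sum_ite_eq, Finset.mem_univ, if_true]
      rw [Finset.sum_comm]
    rw [key]
    obtain ⟨⟨i0, k0⟩, hik⟩ := Function.ne_iff.mp hx
    apply Finset.sum_pos'
    · intro k _
      exact (hM.posSemidef).dotProduct_mulVec_nonneg _
    · refine ⟨k0, Finset.mem_univ _, hM.dotProduct_mulVec_pos ?_⟩
      intro h
      exact hik (congrFun h i0)

lemma sum_mulVec' (f : κ → Matrix ι ι ℂ) (x : ι → ℂ) :
    (∑ k, f k) *ᵥ x = ∑ k, (f k) *ᵥ x := by
  funext i
  simp only [mulVec, dotProduct, Matrix.sum_apply, Finset.sum_apply, Finset.sum_mul]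
  rw [Finset.sum_comm]

lemma dotProduct_sum_mulVec (f : κ → Matrix ι ι ℂ) (x : ι → ℂ) :
    star x ⬝ᵥ ((∑ k, f k) *ᵥ x) = ∑ k, star x ⬝ᵥ (f k *ᵥ x) := by
  rw [sum_mulVec']
  simp only [dotProduct, Finset.sum_apply, Finset.mul_sum]
  rw [Finset.sum_comm]

lemma posDef_sum [Nonempty κ] {f : κ → Matrix ι ι ℂ} (h : ∀ k, (f k).PosDef) :
    (∑ k, f k).PosDef := by
  refine PosDef.of_dotProduct_mulVec_pos ?_ ?_
  · have h1 : (∑ k, f k)ᴴ = ∑ k, (f k)ᴴ := by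
      simp [conjTranspose_sum]
    rw [Matrix.IsHermitian, h1]
    exact Finset.sum_congr rfl fun k _ => (h k).1
  · intro x hx
    rw [dotProduct_sum_mulVec]
    exact Finset.sum_pos (fun k _ => (h k).dotProduct_mulVec_pos hx) Finset.univ_nonempty

lemma posSemidef_sum' {f : κ → Matrix ι ι ℂ} (h : ∀ k, (f k).PosSemidef) :
    (∑ k, f k).PosSemidef :=
  Finset.sum_induction f _ (fun _ _ ha hb => ha.add hb) Matrix.PosSemidef.zero
    (fun k _ => h k)

lemma posDef_smul_real {M : Matrix ι ι ℂ} (hM : M.PosDef) {r : ℝ} (hr : 0 < r) :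
    (((r : ℂ)) • M).PosDef := by
  refine PosDef.of_dotProduct_mulVec_pos ?_ ?_
  · rw [Matrix.IsHermitian, conjTranspose_smul]
    rw [hM.1.eq]
    norm_num
  · intro x hx
    rw [smul_mulVec, dotProduct_smul]
    have h1 : (0:ℂ) < (r:ℂ) := by
      rw [Complex.lt_def]
      constructor
      · simpa using hr
      · simp
    have h2 := hM.dotProduct_mulVec_pos hx
    calc (0:ℂ) = (r:ℂ) * 0 := by ring
      _ < (r:ℂ) * (star x ⬝ᵥ (M *ᵥ x)) := by
          exact mul_lt_mul_of_pos_left h2 h1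
      _ = (r:ℂ) • (star x ⬝ᵥ (M *ᵥ x)) := by rw [smul_eq_mul]

lemma posSemidef_smul_real {M : Matrix ι ι ℂ} (hM : M.PosSemidef) {r : ℝ} (hr : 0 ≤ r) :
    (((r : ℂ)) • M).PosSemidef := by
  refine PosSemidef.of_dotProduct_mulVec_nonneg ?_ ?_
  · rw [Matrix.IsHermitian, conjTranspose_smul]
    rw [hM.1.eq]
    norm_num
  · intro x
    rw [smul_mulVec, dotProduct_smul, smul_eq_mul]
    have h1 : (0:ℂ) ≤ (r:ℂ) := by
      rw [Complex.le_def]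
      constructor
      · simpa using hr
      · simp
    exact mul_nonneg h1 (hM.dotProduct_mulVec_nonneg x)

lemma re_pow_of_real {z : ℂ} (h : z = ((z.re : ℝ) : ℂ)) (n : ℕ) :
    (z ^ n).re = z.re ^ n := by
  conv_lhs => rw [h]
  rw [← Complex.ofReal_pow, Complex.ofReal_re]

variable {n1 n2 : ℕ}

/-- The `k`-th diagonal block of a block matrix. -/
def diagBlock (X : Matrix (Fin n2 × Fin n1) (Fin n2 × Fin n1) ℂ) (k : Fin n2) :
    Matrix (Fin n1) (Fin n1) ℂ :=
  Matrix.of fun a b => X (k, a) (k, b)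

lemma posDef_diagBlock {X : Matrix (Fin n2 × Fin n1) (Fin n2 × Fin n1) ℂ}
    (hX : X.PosDef) (k : Fin n2) : (diagBlock X k).PosDef := by
  refine PosDef.of_dotProduct_mulVec_pos ?_ ?_
  · show (diagBlock X k)ᴴ = diagBlock X k
    ext a b
    simp only [diagBlock, conjTranspose_apply, of_apply]
    have := congrFun (congrFun hX.1 (k, a)) (k, b)
    simpa [conjTranspose_apply] using this
  · intro x hx
    set y : Fin n2 × Fin n1 → ℂ := fun p => if p.1 = k then x p.2 else 0 with hy
    have hyne : y ≠ 0 := by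
      obtain ⟨a, ha⟩ := Function.ne_iff.mp hx
      intro h
      apply ha
      have := congrFun h (k, a)
      simpa [hy] using this
    have h1 : ∀ p, (X *ᵥ y) p = ∑ b, X p (k, b) * x b := by
      intro p
      simp only [mulVec, dotProduct, hy, Fintype.sum_prod_type, mul_ite, mul_zero]
      rw [Finset.sum_comm]
      simp [Finset.sum_ite_eq']
    have key : star y ⬝ᵥ (X *ᵥ y) = star x ⬝ᵥ ((diagBlock X k) *ᵥ x) := by
      simp only [dotProduct, Pi.star_apply, h1, hy, Fintype.sum_prod_type,
        apply_ite (star : ℂ → ℂ), star_zero, ite_mul, zero_mul]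
      rw [Finset.sum_comm]
      simp only [Finset.sum_ite_eq', Finset.mem_univ, if_true]
      simp [mulVec, dotProduct, diagBlock, Finset.mul_sum]
      simp [Fintype.sum_prod_type]
    rw [← key]
    exact hX.dotProduct_mulVec_pos hyne

lemma trace_reindex_blockDiagonal_mul (B : Matrix (Fin n1) (Fin n1) ℂ)
    (X : Matrix (Fin n2 × Fin n1) (Fin n2 × Fin n1) ℂ) :
    ((Matrix.reindex (Equiv.prodComm (Fin n1) (Fin n2)) (Equiv.prodComm (Fin n1) (Fin n2))
        (blockDiagonal fun _ : Fin n2 => B)) * X).trace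
      = ∑ k : Fin n2, (B * diagBlock X k).trace := by
  simp only [Matrix.trace, Matrix.diag_apply, Matrix.mul_apply, reindex_apply,
    submatrix_apply, blockDiagonal_apply, Equiv.prodComm_symm, Equiv.prodComm_apply,
    Prod.swap, Fintype.sum_prod_type, diagBlock, of_apply, ite_mul, zero_mul]
  refine Finset.sum_congr rfl fun k _ => ?_
  refine Finset.sum_congr rfl fun a _ => ?_
  rw [Finset.sum_comm]
  refine Finset.sum_congr rfl fun b _ => ?_
  simp [Finset.sum_ite_eq]

lemma squareOp_det (T : Matrix (Fin n1) (Fin n1) ℂ → Matrix (Fin n2) (Fin n2) ℂ)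
    (X : Matrix (Fin n2 × Fin n1) (Fin n2 × Fin n1) ℂ) :
    (squareOp T X).det = (((n1:ℂ)⁻¹ • ∑ k, T (diagBlock X k)).det) ^ n1 := by
  unfold squareOp
  rw [Matrix.det_reindex_self, Matrix.det_kronecker]
  simp [diagBlock]

end CapSq

open CapSq in
/-- If `T : M_{n1}(ℂ) → M_{n2}(ℂ)` is completely positive and `T̃` is its
squaring, then `cap(T̃) = cap(T)^{n1}`. -/
theorem capacity_squareOp {n1 n2 m : ℕ} (hn1 : 0 < n1) (hn2 : 0 < n2)
    (A : Fin m → Matrix (Fin n2) (Fin n1) ℂ)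
    (T : Matrix (Fin n1) (Fin n1) ℂ → Matrix (Fin n2) (Fin n2) ℂ)
    (hT : ∀ X, T X = ∑ i, A i * X * (A i)ᴴ) :
    capacity (squareOp T) = capacity T ^ n1 := by
  classical
  haveI : Nonempty (Fin n1) := ⟨⟨0, hn1⟩⟩
  haveI : Nonempty (Fin n2) := ⟨⟨0, hn2⟩⟩
  have hn1C : ((n1:ℂ)) ≠ 0 := Nat.cast_ne_zero.mpr hn1.ne'
  have hn2C : ((n2:ℂ)) ≠ 0 := Nat.cast_ne_zero.mpr hn2.ne'
  set pc := Equiv.prodComm (Fin n1) (Fin n2) with hpc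
  -- linearity and positivity of T
  have hTsum : ∀ g : Fin n2 → Matrix (Fin n1) (Fin n1) ℂ,
      T (∑ k, g k) = ∑ k, T (g k) := by
    intro g
    simp only [hT, Matrix.mul_sum, Matrix.sum_mul]
    rw [Finset.sum_comm]
  have hTsmul : ∀ (c : ℂ) (Z : Matrix (Fin n1) (Fin n1) ℂ), T (c • Z) = c • T Z := by
    intro c Z
    simp only [hT, Matrix.mul_smul, Matrix.smul_mul, Finset.smul_sum]
  have hTpsd : ∀ {Z : Matrix (Fin n1) (Fin n1) ℂ}, Z.PosSemidef → (T Z).PosSemidef := by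
    intro Z hZ
    rw [hT]
    exact posSemidef_sum' fun i => hZ.mul_mul_conjTranspose_same (A i)
  -- the two capacity sets
  set S1 : Set ℝ := { r : ℝ | ∃ Y : Matrix (Fin n1) (Fin n1) ℂ, Y.PosDef ∧ Y.det = 1 ∧
    r = ((((n2 : ℂ) / (n1 : ℂ)) • T Y).det).re } with hS1def
  set S2 : Set ℝ := { r : ℝ | ∃ X : Matrix (Fin n2 × Fin n1) (Fin n2 × Fin n1) ℂ,
    X.PosDef ∧ X.det = 1 ∧ r = ((squareOp T X).det).re } with hS2def
  have hc1 : capacity T = sInf S1 := by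
    unfold capacity
    simp only [Fintype.card_fin]
    rfl
  have hcard1 : ((Fintype.card (Fin n2 × Fin n1) : ℂ) /
      (Fintype.card (Fin n2 × Fin n1) : ℂ)) = 1 := by
    apply div_self
    simp only [Fintype.card_prod, Fintype.card_fin]
    exact_mod_cast Nat.mul_ne_zero hn2.ne' hn1.ne'
  have hc2 : capacity (squareOp T) = sInf S2 := by
    unfold capacity
    congr 1
    ext r
    simp only [hcard1, one_smul, hS2def, Set.mem_setOf_eq]
  -- basic facts about S1
  have hEfact : ∀ Y : Matrix (Fin n1) (Fin n1) ℂ, Y.PosSemidef →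
      ((((n2 : ℂ) / (n1 : ℂ)) • T Y).det
        = (((((n2 : ℂ) / (n1 : ℂ)) • T Y).det.re : ℝ) : ℂ)
        ∧ 0 ≤ ((((n2 : ℂ) / (n1 : ℂ)) • T Y).det).re) := by
    intro Y hY
    have hsc : ((n2 : ℂ) / (n1 : ℂ)) = (((n2 : ℝ) / (n1 : ℝ) : ℝ) : ℂ) := by push_cast; rfl
    have hpsd : ((((n2 : ℂ) / (n1 : ℂ)) • T Y)).PosSemidef := by
      rw [hsc]
      exact posSemidef_smul_real (hTpsd hY) (by positivity)
    exact posSemidef_det_re_nonneg hpsd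
  have hS1ne : S1.Nonempty := ⟨_, 1, Matrix.PosDef.one, det_one, rfl⟩
  have hS1lb : ∀ r ∈ S1, (0:ℝ) ≤ r := by
    rintro r ⟨Y, hY, _, rfl⟩
    exact (hEfact Y hY.posSemidef).2
  have hS1bdd : BddBelow S1 := ⟨0, fun r hr => hS1lb r hr⟩
  have hc1nn : (0:ℝ) ≤ sInf S1 := le_csInf hS1ne hS1lb
  -- membership in S2 coming from S1 (the easy direction)
  have hmem : ∀ r ∈ S1, r ^ n1 ∈ S2 := by
    rintro r ⟨Y, hYpd, hYdet, rfl⟩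
    set XY := Matrix.reindex pc pc (blockDiagonal fun _ : Fin n2 => Y) with hXY
    have hXpd : XY.PosDef := by
      rw [hXY, reindex_apply]
      exact posDef_submatrix_equiv (posDef_blockDiagonal hYpd) _
    have hXdet : XY.det = 1 := by
      rw [hXY, det_reindex_self, det_blockDiagonal]
      simp [hYdet]
    have hblocks : ∀ k, diagBlock XY k = Y := by
      intro k
      ext a b
      simp [diagBlock, hXY, hpc, reindex_apply, submatrix_apply, blockDiagonal_apply,
        Equiv.prodComm_symm, Equiv.prodComm_apply, Prod.swap]
    refine ⟨XY, hXpd, hXdet, ?_⟩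
    rw [squareOp_det]
    have hinner : (n1:ℂ)⁻¹ • ∑ k, T (diagBlock XY k) = ((n2 : ℂ) / (n1 : ℂ)) • T Y := by
      simp only [hblocks]
      rw [Finset.sum_const, Finset.card_univ, Fintype.card_fin,
        ← Nat.cast_smul_eq_nsmul ℂ n2, smul_smul, inv_mul_eq_div]
    rw [hinner]
    obtain ⟨hre, _⟩ := hEfact Y hYpd.posSemidef
    exact (re_pow_of_real hre n1).symm
  have hS2ne : S2.Nonempty := by
    obtain ⟨r, hr⟩ := hS1ne
    exact ⟨r ^ n1, hmem r hr⟩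
  have hS2lb : ∀ r ∈ S2, (0:ℝ) ≤ r := by
    rintro r ⟨X, hXpd, _, rfl⟩
    rw [squareOp_det]
    have hFpsd : ((n1:ℂ)⁻¹ • ∑ k, T (diagBlock X k)).PosSemidef := by
      have hsum : (∑ k, T (diagBlock X k)).PosSemidef :=
        posSemidef_sum' fun k => hTpsd (posDef_diagBlock hXpd k).posSemidef
      have h2 : ((n1:ℂ)⁻¹) = ((((n1:ℝ)⁻¹ : ℝ)) : ℂ) := by push_cast; rfl
      rw [h2]
      exact posSemidef_smul_real hsum (by positivity)
    obtain ⟨hre, hnn⟩ := posSemidef_det_re_nonneg hFpsd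
    rw [hre, ← Complex.ofReal_pow, Complex.ofReal_re]
    positivity
  have hS2bdd : BddBelow S2 := ⟨0, fun r hr => hS2lb r hr⟩
  -- the hard direction: every element of S2 is at least (sInf S1)^n1
  have hS2ge : ∀ r ∈ S2, (sInf S1) ^ n1 ≤ r := by
    rintro r ⟨X, hXpd, hXdet, rfl⟩
    set D := fun k => diagBlock X k with hD
    have hDpd : ∀ k, (D k).PosDef := posDef_diagBlock hXpd
    have hsumDpd : (∑ k, D k).PosDef := posDef_sum hDpd
    set Z := (n2:ℂ)⁻¹ • ∑ k, D k with hZ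
    have hZpd : Z.PosDef := by
      rw [hZ, (by push_cast; rfl : ((n2:ℂ)⁻¹) = ((((n2:ℝ)⁻¹ : ℝ)) : ℂ))]
      exact posDef_smul_real hsumDpd (by positivity)
    have hsumZ : ∑ k, D k = (n2:ℂ) • Z := by rw [hZ, smul_inv_smul₀ hn2C]
    obtain ⟨hZre, hZpos⟩ := posDef_det_re_pos hZpd
    set zr := Z.det.re with hzr
    have hZunit : IsUnit Z.det := hZpd.det_pos.ne'.isUnit
    set W := Matrix.reindex pc pc (blockDiagonal fun _ : Fin n2 => Z) with hW
    have hWpd : W.PosDef := by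
      rw [hW, reindex_apply]
      exact posDef_submatrix_equiv (posDef_blockDiagonal hZpd) _
    have hWinv : W⁻¹ = Matrix.reindex pc pc (blockDiagonal fun _ : Fin n2 => Z⁻¹) := by
      apply inv_eq_right_inv
      rw [hW, reindex_apply, reindex_apply,
        submatrix_mul_equiv (blockDiagonal fun _ : Fin n2 => Z)
          (blockDiagonal fun _ : Fin n2 => Z⁻¹) _ pc.symm _,
        ← blockDiagonal_mul]
      have hone : (fun _ : Fin n2 => (1 : Matrix (Fin n1) (Fin n1) ℂ)) = 1 := rfl
      simp only [Z.mul_nonsing_inv hZunit, hone, blockDiagonal_one, submatrix_one_equiv]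
    have htr : (W⁻¹ * X).trace = ((Fintype.card (Fin n2 × Fin n1) : ℂ)) := by
      rw [hWinv, trace_reindex_blockDiagonal_mul, ← trace_sum, ← Matrix.mul_sum, hsumZ,
        Matrix.mul_smul, trace_smul, Z.nonsing_inv_mul hZunit, trace_one]
      simp only [Fintype.card_prod, Fintype.card_fin, smul_eq_mul]
      push_cast
      ring
    have hkey : X.det.re ≤ W.det.re := det_le_of_trace_inv_mul hXpd hWpd htr
    have hWdetre : W.det.re = zr ^ n2 := by
      have h5 : W.det = ((zr ^ n2 : ℝ) : ℂ) := by
        rw [hW, det_reindex_self, det_blockDiagonal, Finset.prod_const, Finset.card_univ,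
          Fintype.card_fin, hZre]
        push_cast
        ring
      rw [h5, Complex.ofReal_re]
    have hzr1 : 1 ≤ zr := by
      have h1 : X.det.re = 1 := by rw [hXdet]; simp
      rw [h1, hWdetre] at hkey
      exact (one_le_pow_iff_of_nonneg hZpos.le hn2.ne').mp hkey
    -- rescale Z to determinant one
    set rr := zr ^ (-(n1:ℝ)⁻¹) with hrr
    have hrpos : (0:ℝ) < rr := Real.rpow_pos_of_pos hZpos _
    have hrpow : rr ^ n1 = zr⁻¹ := by
      rw [hrr, ← Real.rpow_natCast (zr ^ (-(n1:ℝ)⁻¹)) n1, ← Real.rpow_mul hZpos.le,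
        neg_mul, inv_mul_cancel₀ (by exact_mod_cast hn1.ne' : (n1:ℝ) ≠ 0)]
      exact Real.rpow_neg_one zr
    set Y := ((rr : ℝ) : ℂ) • Z with hY
    have hYpd : Y.PosDef := posDef_smul_real hZpd hrpos
    have hYdet : Y.det = 1 := by
      rw [hY, det_smul, Fintype.card_fin, hZre, ← Complex.ofReal_pow, hrpow,
        ← Complex.ofReal_mul, inv_mul_cancel₀ hZpos.ne']
      simp
    set t := ((((n2 : ℂ) / (n1 : ℂ)) • T Y).det).re with ht
    have htS1 : t ∈ S1 := ⟨Y, hYpd, hYdet, rfl⟩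
    have htc1 : sInf S1 ≤ t := csInf_le hS1bdd htS1
    have htnn : (0:ℝ) ≤ t := hS1lb t htS1
    set E := ((n2 : ℂ) / (n1 : ℂ)) • T Z with hE
    obtain ⟨hEre, hEnn⟩ := hEfact Z hZpd.posSemidef
    rw [← hE] at hEre hEnn
    have hrel : ((n2 : ℂ) / (n1 : ℂ)) • T Y = ((rr : ℝ) : ℂ) • E := by
      rw [hY, hTsmul, hE, smul_comm]
    have ht_e : t = rr ^ n2 * E.det.re := by
      have hstep : ((rr:ℂ) ^ n2 * E.det).re = rr ^ n2 * E.det.re := by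
        conv_lhs => rw [hEre]
        rw [← Complex.ofReal_pow, ← Complex.ofReal_mul, Complex.ofReal_re]
      rw [ht, hrel, det_smul, Fintype.card_fin, hstep]
    have hval : (squareOp T X).det.re = E.det.re ^ n1 := by
      rw [squareOp_det]
      have hinner : (n1:ℂ)⁻¹ • ∑ k, T (diagBlock X k) = E := by
        rw [show (∑ k, T (diagBlock X k)) = T (∑ k, D k) from (hTsum D).symm, hsumZ,
          hTsmul, hE, smul_smul, inv_mul_eq_div]
      rw [hinner]
      exact re_pow_of_real hEre n1
    rw [hval]
    have hcomp : E.det.re ^ n1 = t ^ n1 * zr ^ n2 := by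
      have h2 : E.det.re = t / rr ^ n2 := by
        rw [ht_e]
        field_simp
      have h3 : (rr ^ n2) ^ n1 = (zr ^ n2)⁻¹ := by
        rw [← pow_mul, mul_comm n2 n1, pow_mul, hrpow, inv_pow]
      rw [h2, div_pow, h3]
      field_simp
    rw [hcomp]
    calc (sInf S1) ^ n1 = (sInf S1) ^ n1 * 1 := (mul_one _).symm
      _ ≤ t ^ n1 * zr ^ n2 := by
          apply mul_le_mul (pow_le_pow_left₀ hc1nn htc1 n1) (one_le_pow₀ hzr1)
            zero_le_one (pow_nonneg htnn n1)
  -- conclude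
  rw [hc1, hc2]
  apply le_antisymm
  · by_contra hcon
    push_neg at hcon
    set b := sInf S2 with hb
    have hb0 : (0:ℝ) < b := lt_of_le_of_lt (pow_nonneg hc1nn n1) hcon
    set u := b ^ ((n1:ℝ)⁻¹) with hu
    have hu0 : (0:ℝ) ≤ u := (Real.rpow_pos_of_pos hb0 _).le
    have hupow : u ^ n1 = b := by
      rw [hu, ← Real.rpow_natCast (b ^ ((n1:ℝ)⁻¹)) n1, ← Real.rpow_mul hb0.le,
        inv_mul_cancel₀ (by exact_mod_cast hn1.ne' : (n1:ℝ) ≠ 0), Real.rpow_one]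
    have hle : ∀ r ∈ S1, u ≤ r := by
      intro r hr
      have h1 : b ≤ r ^ n1 := csInf_le hS2bdd (hmem r hr)
      exact le_of_pow_le_pow_left₀ hn1.ne' (hS1lb r hr) (by rw [hupow]; exact h1)
    have h2 : u ≤ sInf S1 := le_csInf hS1ne hle
    have h3 : u ^ n1 ≤ (sInf S1) ^ n1 := pow_le_pow_left₀ hu0 h2 n1
    rw [hupow] at h3
    exact absurd (lt_of_lt_of_le hcon h3) (lt_irrefl _)
  · exact le_csInf hS2ne hS2ge
end

section
/- Let T : M_{n1}(ℂ) → M_{n2}(ℂ) be a completely positive operator and let T̃ : M_{n1·n2}(ℂ) → M_{n1·n2}(ℂ) be the operator obtained from T by the squaring construction. Then T is fractional-rank non-decreasing if and only if T̃ is rank non-decreasing, i.e., rank(T̃(X)) ≥ rank(X) for every positive semidefinite X ∈ M_{n1·n2}(ℂ). -/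
open Matrix BigOperators
open scoped ComplexOrder

/-- Transposed currying equivalence. -/
noncomputable def myCurry (n o : Type*) : ((n × o) → ℂ) ≃ₗ[ℂ] (o → n → ℂ) where
  toFun v := fun k i => v (i, k)
  map_add' _ _ := rfl
  map_smul' _ _ := rfl
  invFun w := fun p => w p.2 p.1
  left_inv _ := rfl
  right_inv _ := rfl

lemma my_finrank_pi_submodule {o : Type*} [Fintype o] {V : o → Type*}
    [∀ k, AddCommGroup (V k)] [∀ k, Module ℂ (V k)] [∀ k, FiniteDimensional ℂ (V k)]
    (p : ∀ k, Submodule ℂ (V k)) :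
    Module.finrank ℂ (Submodule.pi Set.univ p) = ∑ k, Module.finrank ℂ (p k) := by
  have e : (Submodule.pi Set.univ p) ≃ₗ[ℂ] (Π k, p k) :=
    { toFun := fun x k => ⟨x.1 k, x.2 k (Set.mem_univ k)⟩
      map_add' := fun _ _ => rfl
      map_smul' := fun _ _ => rfl
      invFun := fun y => ⟨fun k => (y k).1, fun k _ => (y k).2⟩
      left_inv := fun _ => rfl
      right_inv := fun _ => rfl }
  rw [e.finrank_eq, Module.finrank_pi_fintype]

lemma my_rank_blockDiagonal {n o : Type*} [Fintype n] [Fintype o] [DecidableEq n] [DecidableEq o]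
    (M : o → Matrix n n ℂ) :
    (Matrix.blockDiagonal M).rank = ∑ k, (M k).rank := by
  classical
  set e := myCurry n o with he
  set g : (o → n → ℂ) →ₗ[ℂ] (o → n → ℂ) :=
    LinearMap.pi (fun k => (M k).mulVecLin ∘ₗ LinearMap.proj k) with hg
  have key : (blockDiagonal M).mulVecLin = (e.symm.toLinearMap ∘ₗ g) ∘ₗ e.toLinearMap := by
    apply LinearMap.ext; intro v
    funext p
    obtain ⟨i, k⟩ := p
    show (blockDiagonal M).mulVec v (i, k) = (M k).mulVec (fun a => v (a, k)) i
    simp [mulVec, dotProduct, Fintype.sum_prod_type, blockDiagonal_apply, ite_mul,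
      Finset.sum_ite_eq', Finset.sum_ite_eq]
  have hrange : LinearMap.range g = Submodule.pi Set.univ (fun k => LinearMap.range (M k).mulVecLin) := by
    ext x
    simp only [LinearMap.mem_range, Submodule.mem_pi, Set.mem_univ, forall_true_left]
    constructor
    · rintro ⟨v, rfl⟩ k
      exact ⟨v k, rfl⟩
    · intro hx
      choose v hv using hx
      exact ⟨v, funext hv⟩
  have : (blockDiagonal M).rank
      = Module.finrank ℂ (Submodule.map e.symm.toLinearMap (LinearMap.range g)) := by
    rw [Matrix.rank, key, LinearMap.range_comp, LinearEquiv.range, Submodule.map_top,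
      LinearMap.range_comp]
  rw [this, LinearEquiv.finrank_map_eq e.symm, hrange, my_finrank_pi_submodule]
  rfl

lemma my_rank_smul {m l : Type*} [Fintype m] [Fintype l] [DecidableEq m]
    {c : ℂ} (hc : c ≠ 0) (A : Matrix m l ℂ) : (c • A).rank = A.rank := by
  have h : c • A = (c • (1 : Matrix m m ℂ)) * A := by
    rw [smul_mul, Matrix.one_mul]
  rw [h, Matrix.rank_mul_eq_right_of_isUnit_det]
  simp [Matrix.det_smul, isUnit_iff_ne_zero, hc]

lemma squareOp_eq {n1 n2 : ℕ}
    (T : Matrix (Fin n1) (Fin n1) ℂ → Matrix (Fin n2) (Fin n2) ℂ)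
    (X : Matrix (Fin n2 × Fin n1) (Fin n2 × Fin n1) ℂ) :
    squareOp T X = Matrix.blockDiagonal (fun _ : Fin n1 =>
      (n1 : ℂ)⁻¹ • ∑ k : Fin n2, T (Matrix.of fun a b => X (k, a) (k, b))) := by
  ext ⟨i, k⟩ ⟨j, l⟩
  simp [squareOp, blockDiagonal_apply, Matrix.one_apply, ite_mul, eq_comm]

/-- If the kernel of `E` is contained in the kernel of `X` (as square matrices of the
same size), then `rank X ≤ rank E`. -/
lemma my_rank_le_of_ker_le {n : Type*} [Fintype n] [DecidableEq n]
    (X E : Matrix n n ℂ)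
    (h : LinearMap.ker E.mulVecLin ≤ LinearMap.ker X.mulVecLin) :
    X.rank ≤ E.rank := by
  have h1 := LinearMap.finrank_range_add_finrank_ker X.mulVecLin
  have h2 := LinearMap.finrank_range_add_finrank_ker E.mulVecLin
  have h3 := Submodule.finrank_mono h
  have hx : X.rank = Module.finrank ℂ (LinearMap.range X.mulVecLin) := rfl
  have he : E.rank = Module.finrank ℂ (LinearMap.range E.mulVecLin) := rfl
  omega

/-- A completely positive operator `T : M_{n1}(ℂ) → M_{n2}(ℂ)` is
fractional-rank non-decreasing (`rank(T X)/n2 ≥ rank X / n1` on PSD matrices) if and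
only if its squaring `T̃` is rank non-decreasing (`rank(T̃ X) ≥ rank X` on PSD matrices). -/
theorem squareOp_rank_nondecreasing_iff {n1 n2 m : ℕ} (hn1 : 0 < n1) (hn2 : 0 < n2)
    (A : Fin m → Matrix (Fin n2) (Fin n1) ℂ)
    (T : Matrix (Fin n1) (Fin n1) ℂ → Matrix (Fin n2) (Fin n2) ℂ)
    (hT : ∀ X, T X = ∑ i, A i * X * (A i)ᴴ) :
    (∀ X : Matrix (Fin n1) (Fin n1) ℂ, X.PosSemidef → n2 * X.rank ≤ n1 * (T X).rank) ↔
    (∀ X : Matrix (Fin n2 × Fin n1) (Fin n2 × Fin n1) ℂ, X.PosSemidef →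
      X.rank ≤ (squareOp T X).rank) := by
  have hn1c : (n1 : ℂ) ≠ 0 := Nat.cast_ne_zero.mpr hn1.ne'
  constructor
  · -- forward
    intro h X hX
    -- diagonal blocks
    set Xd : Fin n2 → Matrix (Fin n1) (Fin n1) ℂ :=
      fun k => Matrix.of fun a b => X (k, a) (k, b) with hXd
    have hXdpsd : ∀ k, (Xd k).PosSemidef := fun k =>
      hX.submatrix (fun a : Fin n1 => (k, a))
    set D : Matrix (Fin n1) (Fin n1) ℂ := ∑ k, Xd k with hD
    have hDpsd : D.PosSemidef := by
      rw [hD]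
      refine Finset.sum_induction _ _ (fun a b ha hb => ha.add hb) ?_ fun k _ => hXdpsd k
      exact Matrix.PosSemidef.zero
    -- sum of blocks through T
    have hsum : ∑ k, T (Xd k) = T D := by
      simp only [hT, hD]
      rw [Finset.sum_comm]
      refine Finset.sum_congr rfl fun i _ => ?_
      rw [Matrix.mul_sum, Matrix.sum_mul]
    -- rank of squareOp
    have hrank_sq : (squareOp T X).rank = n1 * (T D).rank := by
      rw [squareOp_eq, my_rank_blockDiagonal]
      simp only [← hXd, hsum, Finset.sum_const, Finset.card_univ, Fintype.card_fin,
        smul_eq_mul]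
      rw [my_rank_smul (inv_ne_zero hn1c)]
      exact congrArg (fun M => n1 * M.rank) hsum
    -- the comparison matrix
    set E : Matrix (Fin n2 × Fin n1) (Fin n2 × Fin n1) ℂ :=
      Matrix.reindex (Equiv.prodComm (Fin n1) (Fin n2)) (Equiv.prodComm (Fin n1) (Fin n2))
        (Matrix.blockDiagonal (fun _ : Fin n2 => D)) with hE
    have hErank : E.rank = n2 * D.rank := by
      rw [hE, Matrix.rank_reindex, my_rank_blockDiagonal]
      simp
    -- kernel inclusion
    obtain ⟨B, hB⟩ : ∃ B : Matrix (Fin n2 × Fin n1) (Fin n2 × Fin n1) ℂ, X = Bᴴ * B := by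
      open scoped MatrixOrder in exact CStarAlgebra.nonneg_iff_eq_star_mul_self.mp hX.nonneg
    have hker : LinearMap.ker E.mulVecLin ≤ LinearMap.ker X.mulVecLin := by
      intro v hv
      rw [LinearMap.mem_ker, Matrix.mulVecLin_apply] at hv ⊢
      -- each block of v is killed by D
      have hDv : ∀ k, D.mulVec (fun a => v (k, a)) = 0 := by
        intro k
        funext a
        have := congrFun hv (k, a)
        simpa [hE, Matrix.mulVec, dotProduct, Fintype.sum_prod_type, blockDiagonal_apply,
          ite_mul, eq_comm] using this
      -- hence each diagonal block kills its part of v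
      have hblock : ∀ k, star (fun a => v (k, a)) ⬝ᵥ (Xd k).mulVec (fun a => v (k, a)) = 0 := by
        intro k
        set w : Fin n1 → ℂ := fun a => v (k, a) with hw
        have hexp : (∑ j, Xd j) *ᵥ w = ∑ j, Xd j *ᵥ w :=
          map_sum (AddMonoidHom.mk' (fun M : Matrix (Fin n1) (Fin n1) ℂ => M *ᵥ w)
            fun M N => Matrix.add_mulVec M N w) Xd Finset.univ
        have hdps : star w ⬝ᵥ (∑ j, Xd j *ᵥ w) = ∑ j, star w ⬝ᵥ Xd j *ᵥ w :=
          map_sum (AddMonoidHom.mk' (fun u : Fin n1 → ℂ => star w ⬝ᵥ u)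
            fun u₁ u₂ => dotProduct_add (star w) u₁ u₂) (fun j => Xd j *ᵥ w) Finset.univ
        have h0 : ∑ j, star w ⬝ᵥ (Xd j).mulVec w = 0 := by
          have hz : star w ⬝ᵥ D.mulVec w = 0 := by rw [hDv k]; simp
          rw [hD, hexp, hdps] at hz
          exact hz
        have := (Finset.sum_eq_zero_iff_of_nonneg
          (fun j _ => (hXdpsd j).dotProduct_mulVec_nonneg w)).mp h0 k (Finset.mem_univ k)
        exact this
      -- translate to the factorization
      have hBk : ∀ k, (B.submatrix id (fun a : Fin n1 => (k, a))).mulVec (fun a => v (k, a)) = 0 := by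
        intro k
        set Bk := B.submatrix id (fun a : Fin n1 => (k, a)) with hBkdef
        have hfac : Xd k = Bkᴴ * Bk := by
          ext a b
          simp [hBkdef, hXd, hB, Matrix.mul_apply, Matrix.conjTranspose_apply]
        have := hblock k
        rw [hfac, ← Matrix.mulVec_mulVec, Matrix.dotProduct_mulVec,
          Matrix.vecMul_conjTranspose, star_star] at this
        exact dotProduct_star_self_eq_zero.mp this
      have hBv : B.mulVec v = 0 := by
        funext c
        have : B.mulVec v c = ∑ k, (B.submatrix id (fun a : Fin n1 => (k, a))).mulVec
            (fun a => v (k, a)) c := by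
          simp [Matrix.mulVec, dotProduct, Fintype.sum_prod_type]
        rw [this]
        simp only [fun k => congrFun (hBk k) c]
        simp
      rw [hB, ← Matrix.mulVec_mulVec, hBv, Matrix.mulVec_zero]
    calc X.rank ≤ E.rank := my_rank_le_of_ker_le X E hker
      _ = n2 * D.rank := hErank
      _ ≤ n1 * (T D).rank := h D hDpsd
      _ = (squareOp T X).rank := hrank_sq.symm
  · -- backward
    intro h Y hY
    set X : Matrix (Fin n2 × Fin n1) (Fin n2 × Fin n1) ℂ :=
      Matrix.reindex (Equiv.prodComm (Fin n1) (Fin n2)) (Equiv.prodComm (Fin n1) (Fin n2))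
        (Matrix.blockDiagonal (fun _ : Fin n2 => Y)) with hXdef
    have hXpsd : X.PosSemidef := by
      obtain ⟨C, hC⟩ : ∃ C : Matrix (Fin n1) (Fin n1) ℂ, Y = Cᴴ * C := by
        open scoped MatrixOrder in exact CStarAlgebra.nonneg_iff_eq_star_mul_self.mp hY.nonneg
      have hbd : (Matrix.blockDiagonal (fun _ : Fin n2 => Y)) =
          (Matrix.blockDiagonal (fun _ : Fin n2 => C))ᴴ *
          (Matrix.blockDiagonal (fun _ : Fin n2 => C)) := by
        rw [Matrix.blockDiagonal_conjTranspose, ← Matrix.blockDiagonal_mul]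
        exact congrArg _ (funext fun _ => hC)
      rw [hXdef, Matrix.reindex_apply]
      exact Matrix.PosSemidef.submatrix (hbd ▸ Matrix.posSemidef_conjTranspose_mul_self _) _
    have hXblocks : ∀ k : Fin n2, (Matrix.of fun a b => X (k, a) (k, b)) = Y := by
      intro k
      ext a b
      simp [hXdef, blockDiagonal_apply]
    have hXrank : X.rank = n2 * Y.rank := by
      rw [hXdef, Matrix.rank_reindex, my_rank_blockDiagonal]
      simp [mul_comm]
    have hsqrank : (squareOp T X).rank = n1 * (T Y).rank := by
      rw [squareOp_eq, my_rank_blockDiagonal]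
      simp only [hXblocks, Finset.sum_const, Finset.card_univ, Fintype.card_fin, smul_eq_mul]
      congr 1
      have : (n1 : ℂ)⁻¹ • (n2 : ℕ) • T Y = ((n1 : ℂ)⁻¹ * (n2 : ℕ)) • T Y := by
        rw [← Nat.cast_smul_eq_nsmul ℂ, smul_smul]
      rw [this, my_rank_smul]
      exact mul_ne_zero (inv_ne_zero hn1c) (Nat.cast_ne_zero.mpr hn2.ne')
    have := h X hXpsd
    rw [hXrank, hsqrank] at this
    exact this
end

section
/- Let T : M_{n1}(ℂ) → M_{n2}(ℂ) be a completely positive operator with dual T*. Then cap(T)^{1/n2} = (n2/n1)·cap(T*)^{1/n1}. -/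
open Matrix BigOperators
open scoped ComplexOrder

open scoped Pointwise

namespace CapacityDualAux

variable {ι : Type*} [Fintype ι] [DecidableEq ι]

lemma det_re_eq_prod {M : Matrix ι ι ℂ} (hM : M.PosSemidef) :
    M.det.re = ∏ i, hM.1.eigenvalues i := by
  rw [hM.1.det_eq_prod_eigenvalues]
  norm_cast

lemma det_eq_re_ofReal {M : Matrix ι ι ℂ} (hM : M.PosSemidef) :
    M.det = (M.det.re : ℂ) := by
  rw [det_re_eq_prod hM, hM.1.det_eq_prod_eigenvalues]
  norm_cast

lemma det_re_nonneg {M : Matrix ι ι ℂ} (hM : M.PosSemidef) : 0 ≤ M.det.re := by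
  rw [det_re_eq_prod hM]
  exact Finset.prod_nonneg fun i _ => hM.eigenvalues_nonneg i

lemma trace_eq_sum_eigenvalues {M : Matrix ι ι ℂ} (hM : M.IsHermitian) :
    M.trace = ((∑ i, hM.eigenvalues i : ℝ) : ℂ) := by
  conv_lhs => rw [hM.spectral_theorem, Unitary.conjStarAlgAut_apply]
  rw [Matrix.trace_mul_comm, ← Matrix.mul_assoc, Unitary.coe_star_mul_self, Matrix.one_mul,
    Matrix.trace_diagonal]
  simp [Function.comp]

lemma amgm {f : ι → ℝ} (hf : ∀ i, 0 ≤ f i) (hcard : 0 < Fintype.card ι) :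
    ∏ i, f i ≤ ((∑ i, f i) / Fintype.card ι) ^ Fintype.card ι := by
  set n := Fintype.card ι with hn
  have h := Real.geom_mean_le_arith_mean_weighted Finset.univ (fun _ => (n : ℝ)⁻¹) f
    (fun i _ => by positivity) (by simp [Finset.card_univ, ← hn, mul_inv_cancel₀ (by positivity : (n:ℝ) ≠ 0)]) (fun i _ => hf i)
  rw [Real.finset_prod_rpow _ _ (fun i _ => hf i)] at h
  have h2 : (∏ i, f i) ^ ((n : ℝ)⁻¹) ≤ (∑ i, f i) / n := by
    refine h.trans (le_of_eq ?_)
    rw [Finset.sum_congr rfl (fun i _ => (inv_mul_eq_div _ _))]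
    rw [← Finset.sum_div]
  have hp : 0 ≤ ∏ i, f i := Finset.prod_nonneg fun i _ => hf i
  calc ∏ i, f i = ((∏ i, f i) ^ ((n:ℝ)⁻¹)) ^ n := (Real.rpow_inv_natCast_pow hp hcard.ne').symm
    _ ≤ ((∑ i, f i) / n) ^ n := by
        exact pow_le_pow_left₀ (Real.rpow_nonneg hp _) h2 n


lemma trace_re_nonneg {M : Matrix ι ι ℂ} (hM : M.PosSemidef) : 0 ≤ M.trace.re := by
  rw [trace_eq_sum_eigenvalues hM.1, Complex.ofReal_re]
  exact Finset.sum_nonneg fun i _ => hM.eigenvalues_nonneg i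

lemma det_re_le_trace_pow {M : Matrix ι ι ℂ} (hM : M.PosSemidef) (hc : 0 < Fintype.card ι) :
    M.det.re ≤ (M.trace.re / (Fintype.card ι : ℝ)) ^ Fintype.card ι := by
  rw [det_re_eq_prod hM, trace_eq_sum_eigenvalues hM.1,
    Complex.ofReal_re]
  exact amgm (fun i => hM.eigenvalues_nonneg i) hc

open scoped MatrixOrder in
lemma det_mul_det_le {M Y : Matrix ι ι ℂ} (hM : M.PosSemidef) (hY : Y.PosSemidef)
    (hc : 0 < Fintype.card ι) :
    M.det.re * Y.det.re ≤ ((M * Y).trace.re / (Fintype.card ι : ℝ)) ^ Fintype.card ι := by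
  set R := CFC.sqrt Y with hR
  have hRpsd : R.PosSemidef := (CFC.sqrt_nonneg Y).posSemidef
  have hRh : Rᴴ = R := hRpsd.1
  have hsq : R * R = Y := CFC.sqrt_mul_sqrt_self Y hY.nonneg
  have hN : (R * M * Rᴴ).PosSemidef := hM.mul_mul_conjTranspose_same R
  have hdet : (R * M * Rᴴ).det = M.det * Y.det := by
    rw [hRh, Matrix.det_mul, Matrix.det_mul, ← hsq]
    · rw [Matrix.det_mul]; ring
  have htr : (R * M * Rᴴ).trace = (M * Y).trace := by
    rw [hRh, Matrix.trace_mul_comm, ← Matrix.mul_assoc, hsq,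
      Matrix.trace_mul_comm]
  have h := det_re_le_trace_pow hN hc
  rw [hdet, htr] at h
  refine le_trans (le_of_eq ?_) h
  have himM : M.det.im = 0 := by rw [det_eq_re_ofReal hM]; simp
  have himY : Y.det.im = 0 := by rw [det_eq_re_ofReal hY]; simp
  rw [Complex.mul_re, himM, himY]; ring

lemma psd_sum {m : ℕ} {f : Fin m → Matrix ι ι ℂ} (h : ∀ i, (f i).PosSemidef) :
    (∑ i, f i).PosSemidef := by
  classical
  exact Finset.sum_induction _ _ (fun a b ha hb => ha.add hb) Matrix.PosSemidef.zero
    (fun i _ => h i)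

lemma trace_pair {n1 n2 m : ℕ} (A : Fin m → Matrix (Fin n2) (Fin n1) ℂ)
    (X : Matrix (Fin n1) (Fin n1) ℂ) (Y : Matrix (Fin n2) (Fin n2) ℂ) :
    ((∑ i, A i * X * (A i)ᴴ) * Y).trace = (X * ∑ i, (A i)ᴴ * Y * A i).trace := by
  rw [Finset.sum_mul, Matrix.mul_sum, Matrix.trace_sum, Matrix.trace_sum]
  refine Finset.sum_congr rfl fun i _ => ?_
  simp only [Matrix.mul_assoc]
  rw [Matrix.trace_mul_comm]
  simp only [Matrix.mul_assoc]

lemma posDef_of_det_ne_zero {M : Matrix ι ι ℂ} (hM : M.PosSemidef) (h : M.det ≠ 0) :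
    M.PosDef := by
  refine posDef_iff_dotProduct_mulVec.mpr
    ⟨hM.1, fun x hx => lt_of_le_of_ne (hM.dotProduct_mulVec_nonneg x) (fun h0 => ?_)⟩
  have hzero : M *ᵥ x = 0 := (hM.dotProduct_mulVec_zero_iff x).mp h0.symm
  have hu : IsUnit M := (Matrix.isUnit_iff_isUnit_det _).2 h.isUnit
  have hinj := Matrix.mulVec_injective_iff_isUnit.mpr hu
  exact hx (hinj (by simpa using hzero))

lemma posDef_smul {M : Matrix ι ι ℂ} (hM : M.PosDef) {c : ℝ} (hc : 0 < c) :
    ((c : ℂ) • M).PosDef := by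
  refine posDef_iff_dotProduct_mulVec.mpr ⟨?_, fun x hx => ?_⟩
  · have := hM.1
    unfold Matrix.IsHermitian at this ⊢
    rw [Matrix.conjTranspose_smul, this]
    simp
  · have h := hM.dotProduct_mulVec_pos hx
    rw [Matrix.smul_mulVec, dotProduct_smul, smul_eq_mul]
    rw [Complex.lt_def] at h ⊢
    simp only [Complex.zero_re, Complex.zero_im, Complex.re_ofReal_mul,
      Complex.im_ofReal_mul] at h ⊢
    exact ⟨mul_pos hc h.1, by rw [← h.2, mul_zero]⟩


lemma key {n1 n2 m : ℕ} (hn1 : 0 < n1) (hn2 : 0 < n2) (A : Fin m → Matrix (Fin n2) (Fin n1) ℂ) :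
    (sInf {r : ℝ | ∃ X : Matrix (Fin n1) (Fin n1) ℂ, X.PosDef ∧ X.det = 1 ∧
        r = ((∑ i, A i * X * (A i)ᴴ).det).re}) ^ ((n2:ℝ)⁻¹) ≤
      ((n1:ℝ)/(n2:ℝ)) * (sInf {r : ℝ | ∃ Y : Matrix (Fin n2) (Fin n2) ℂ, Y.PosDef ∧ Y.det = 1 ∧
        r = ((∑ i, (A i)ᴴ * Y * A i).det).re}) ^ ((n1:ℝ)⁻¹) := by
  have hn1' : ((n1:ℝ)) ≠ 0 := Nat.cast_ne_zero.mpr hn1.ne'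
  have hn2' : ((n2:ℝ)) ≠ 0 := Nat.cast_ne_zero.mpr hn2.ne'
  set S2 := {r : ℝ | ∃ X : Matrix (Fin n1) (Fin n1) ℂ, X.PosDef ∧ X.det = 1 ∧
      r = ((∑ i, A i * X * (A i)ᴴ).det).re} with hS2
  set S1 := {r : ℝ | ∃ Y : Matrix (Fin n2) (Fin n2) ℂ, Y.PosDef ∧ Y.det = 1 ∧
      r = ((∑ i, (A i)ᴴ * Y * A i).det).re} with hS1
  have hpsd2 : ∀ X : Matrix (Fin n1) (Fin n1) ℂ, X.PosSemidef →
      (∑ i, A i * X * (A i)ᴴ).PosSemidef := fun X hX =>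
    psd_sum fun i => hX.mul_mul_conjTranspose_same (A i)
  have hpsd1 : ∀ Y : Matrix (Fin n2) (Fin n2) ℂ, Y.PosSemidef →
      (∑ i, (A i)ᴴ * Y * A i).PosSemidef := fun Y hY =>
    psd_sum fun i => hY.conjTranspose_mul_mul_same (A i)
  have hlb2 : ∀ r ∈ S2, 0 ≤ r := by
    rintro r ⟨X, hX, -, rfl⟩
    exact det_re_nonneg (hpsd2 X hX.posSemidef)
  have hlb1 : ∀ r ∈ S1, 0 ≤ r := by
    rintro r ⟨Y, hY, -, rfl⟩
    exact det_re_nonneg (hpsd1 Y hY.posSemidef)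
  have hbdd2 : BddBelow S2 := ⟨0, hlb2⟩
  have hne2 : S2.Nonempty := ⟨_, 1, Matrix.PosDef.one, Matrix.det_one, rfl⟩
  have hne1 : S1.Nonempty := ⟨_, 1, Matrix.PosDef.one, Matrix.det_one, rfl⟩
  set d2 := sInf S2 with hd2def
  have hd2 : 0 ≤ d2 := le_csInf hne2 hlb2
  have claim : ∀ y ∈ S1, d2 ^ ((n2:ℝ)⁻¹) ≤ ((n1:ℝ)/(n2:ℝ)) * y ^ ((n1:ℝ)⁻¹) := by
    rintro y ⟨Y, hY, hYdet, rfl⟩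
    set M := ∑ i, (A i)ᴴ * Y * A i with hMdef
    have hMpsd : M.PosSemidef := hpsd1 Y hY.posSemidef
    set y := M.det.re with hydef
    have hynn : 0 ≤ y := det_re_nonneg hMpsd
    have main : ∀ X : Matrix (Fin n1) (Fin n1) ℂ, X.PosDef → X.det = 1 →
        d2 ≤ ((X * M).trace.re / (n2:ℝ)) ^ n2 := by
      intro X hX hXdet
      have hmem : ((∑ i, A i * X * (A i)ᴴ).det).re ∈ S2 := ⟨X, hX, hXdet, rfl⟩
      refine (csInf_le hbdd2 hmem).trans ?_
      have h := det_mul_det_le (hpsd2 X hX.posSemidef) hY.posSemidef (by simpa using hn2)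
      rw [hYdet] at h
      simp only [Complex.one_re, mul_one, Fintype.card_fin] at h
      rwa [trace_pair] at h
    by_cases hy0 : y = 0
    · -- singular case : d2 = 0
      have hd2z : d2 = 0 := by
        refine le_antisymm (le_of_forall_pos_le_add fun ε hε => ?_) hd2
        set lam := hMpsd.1.eigenvalues with hlam
        have hlnn : ∀ k, 0 ≤ lam k := hMpsd.eigenvalues_nonneg
        obtain ⟨k0, -, hk0⟩ : ∃ k ∈ Finset.univ, lam k = 0 :=
          Finset.prod_eq_zero_iff.mp (by rw [← det_re_eq_prod hMpsd]; exact hy0)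
        set S := ∑ k, lam k with hSdef
        have hS : 0 ≤ S := Finset.sum_nonneg fun k _ => hlnn k
        set ε' := min ε 1 with hε'def
        have hε'pos : 0 < ε' := lt_min hε zero_lt_one
        set t := ε' * n2 / (S + 1) with htdef
        have htpos : 0 < t := by positivity
        set g : Fin n1 → ℝ := fun k => if k = k0 then (t ^ (n1-1))⁻¹ else t with hg
        have hgpos : ∀ k, 0 < g k := by
          intro k
          by_cases h : k = k0 <;> simp only [hg, h, if_true, if_false] <;> positivity
        have hgprod : ∏ k, g k = 1 := by
          rw [← Finset.mul_prod_erase Finset.univ g (Finset.mem_univ k0)]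
          have he : ∀ k ∈ Finset.univ.erase k0, g k = t := by
            intro k hk
            simp [hg, (Finset.mem_erase.mp hk).1]
          rw [Finset.prod_congr rfl he, Finset.prod_const,
            Finset.card_erase_of_mem (Finset.mem_univ k0), Finset.card_univ, Fintype.card_fin]
          simp only [hg, if_true]
          exact inv_mul_cancel₀ (pow_ne_zero _ htpos.ne')
        set U := (hMpsd.1.eigenvectorUnitary : Matrix (Fin n1) (Fin n1) ℂ) with hU
        have hU2 := hMpsd.1.eigenvectorUnitary.2
        have hU1 : star U * U = 1 := Matrix.mem_unitaryGroup_iff'.mp hU2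
        have hUdet : U.det * (star U).det = 1 := by
          rw [← Matrix.det_mul, Matrix.mem_unitaryGroup_iff.mp hU2, Matrix.det_one]
        set D := Matrix.diagonal (fun k => (g k : ℂ)) with hD
        have hDpd : D.PosDef :=
          Matrix.PosDef.diagonal fun k => Complex.zero_lt_real.mpr (hgpos k)
        set X := U * D * star U with hXdef
        have hXpsd : X.PosSemidef := by
          have := hDpd.posSemidef.mul_mul_conjTranspose_same U
          rwa [← Matrix.star_eq_conjTranspose] at this
        have hDdet : D.det = 1 := by
          rw [hD, Matrix.det_diagonal]
          rw [show ∏ k, ((g k : ℝ) : ℂ) = ((∏ k, g k : ℝ) : ℂ) by norm_cast]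
          rw [hgprod]; norm_num
        have hXdet : X.det = 1 := by
          rw [hXdef, Matrix.det_mul, Matrix.det_mul]
          calc U.det * D.det * (star U).det = D.det * (U.det * (star U).det) := by ring
            _ = 1 := by rw [hUdet, hDdet, mul_one]
        have hXpd : X.PosDef := posDef_of_det_ne_zero hXpsd (by rw [hXdet]; exact one_ne_zero)
        have hXM : X * M = U * (D * Matrix.diagonal (RCLike.ofReal ∘ lam)) * star U := by
          conv_lhs => rw [hXdef, hMpsd.1.spectral_theorem, Unitary.conjStarAlgAut_apply]
          simp only [Matrix.mul_assoc]
          rw [← Matrix.mul_assoc (star U) U, hU1, Matrix.one_mul]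
        have htrace : (X * M).trace = ((∑ k, g k * lam k : ℝ) : ℂ) := by
          rw [hXM, Matrix.trace_mul_comm, ← Matrix.mul_assoc, hU1, Matrix.one_mul,
            Matrix.diagonal_mul_diagonal, Matrix.trace_diagonal]
          push_cast
          rfl
        have hsum : ∑ k, g k * lam k ≤ t * S := by
          have hb : ∀ k, g k * lam k ≤ t * lam k := by
            intro k
            by_cases h : k = k0
            · subst h; rw [hk0]; simp
            · simp [hg, h]
          calc ∑ k, g k * lam k ≤ ∑ k, t * lam k := Finset.sum_le_sum fun k _ => hb k
            _ = t * S := by rw [← Finset.mul_sum]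
        have hsumnn : 0 ≤ ∑ k, g k * lam k :=
          Finset.sum_nonneg fun k _ => mul_nonneg (hgpos k).le (hlnn k)
        have hu1 : (∑ k, g k * lam k) / n2 ≤ ε' := by
          have h3 : S / (S + 1) ≤ 1 := by
            rw [div_le_one (by positivity)]; linarith
          calc (∑ k, g k * lam k) / n2 ≤ t * S / n2 := by gcongr
            _ = ε' * (S / (S + 1)) := by rw [htdef]; field_simp
            _ ≤ ε' * 1 := mul_le_mul_of_nonneg_left h3 hε'pos.le
            _ = ε' := mul_one _
        have h := main X hXpd hXdet
        rw [htrace, Complex.ofReal_re] at h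
        have hun : 0 ≤ (∑ k, g k * lam k) / n2 := by positivity
        have hle1 : (∑ k, g k * lam k) / n2 ≤ 1 := hu1.trans (min_le_right _ _)
        have hpow : ((∑ k, g k * lam k) / (n2:ℝ)) ^ n2 ≤ (∑ k, g k * lam k) / n2 := by
          calc ((∑ k, g k * lam k) / (n2:ℝ)) ^ n2 ≤ ((∑ k, g k * lam k) / (n2:ℝ)) ^ 1 :=
                pow_le_pow_of_le_one hun hle1 hn2
            _ = _ := pow_one _
        calc d2 ≤ _ := h
          _ ≤ (∑ k, g k * lam k) / n2 := hpow
          _ ≤ ε' := hu1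
          _ ≤ ε := min_le_left _ _
          _ = 0 + ε := (zero_add ε).symm
      rw [hd2z, Real.zero_rpow (inv_ne_zero hn2')]
      exact mul_nonneg (by positivity) (Real.rpow_nonneg hynn _)
    · -- positive definite case
      have hypos : 0 < y := lt_of_le_of_ne hynn (Ne.symm hy0)
      have hMdet0 : M.det ≠ 0 := by
        rw [det_eq_re_ofReal hMpsd]
        exact Complex.ofReal_ne_zero.mpr hy0
      have hMpd : M.PosDef := posDef_of_det_ne_zero hMpsd hMdet0
      set c := y ^ ((n1:ℝ)⁻¹) with hcdef
      have hcpos : 0 < c := Real.rpow_pos_of_pos hypos _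
      set X := (c:ℂ) • M⁻¹ with hXdef
      have hXpd : X.PosDef := posDef_smul hMpd.inv hcpos
      have hXdet : X.det = 1 := by
        rw [hXdef, Matrix.det_smul, Fintype.card_fin, Matrix.det_nonsing_inv,
          Ring.inverse_eq_inv']
        rw [show ((c:ℂ)) ^ n1 = ((c ^ n1 : ℝ) : ℂ) by push_cast; ring]
        rw [hcdef, Real.rpow_inv_natCast_pow hynn hn1.ne']
        rw [det_eq_re_ofReal hMpsd, ← hydef]
        exact mul_inv_cancel₀ (Complex.ofReal_ne_zero.mpr hy0)
      have hXM : X * M = (c:ℂ) • (1 : Matrix (Fin n1) (Fin n1) ℂ) := by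
        rw [hXdef, Matrix.smul_mul, Matrix.nonsing_inv_mul _ hMdet0.isUnit]
      have htr : (X * M).trace.re = c * n1 := by
        rw [hXM, Matrix.trace_smul, Matrix.trace_one]
        simp [Complex.re_ofReal_mul]
      have h := main X hXpd hXdet
      rw [htr] at h
      have h2 : d2 ^ ((n2:ℝ)⁻¹) ≤ ((c * n1 / n2) ^ n2) ^ ((n2:ℝ)⁻¹) :=
        Real.rpow_le_rpow hd2 h (by positivity)
      rw [Real.pow_rpow_inv_natCast (by positivity) hn2.ne'] at h2
      calc d2 ^ ((n2:ℝ)⁻¹) ≤ c * n1 / n2 := h2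
        _ = (n1/n2) * c := by ring
  set L := d2 ^ ((n2:ℝ)⁻¹) with hL
  have hLnn : 0 ≤ L := Real.rpow_nonneg hd2 _
  have hq : ∀ y ∈ S1, (L * ((n2:ℝ)/(n1:ℝ))) ^ n1 ≤ y := by
    intro y hy
    have h1 := claim y hy
    have h2 : L * ((n2:ℝ)/(n1:ℝ)) ≤ y ^ ((n1:ℝ)⁻¹) := by
      calc L * ((n2:ℝ)/(n1:ℝ)) ≤ (((n1:ℝ)/(n2:ℝ)) * y ^ ((n1:ℝ)⁻¹)) * ((n2:ℝ)/(n1:ℝ)) :=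
            mul_le_mul_of_nonneg_right h1 (by positivity)
        _ = y ^ ((n1:ℝ)⁻¹) := by field_simp
    calc (L * ((n2:ℝ)/(n1:ℝ))) ^ n1 ≤ (y ^ ((n1:ℝ)⁻¹)) ^ n1 :=
          pow_le_pow_left₀ (by positivity) h2 n1
      _ = y := Real.rpow_inv_natCast_pow (hlb1 y hy) hn1.ne'
  have h3 : (L * ((n2:ℝ)/(n1:ℝ))) ^ n1 ≤ sInf S1 := le_csInf hne1 hq
  have h4 : L * ((n2:ℝ)/(n1:ℝ)) ≤ (sInf S1) ^ ((n1:ℝ)⁻¹) := by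
    have h5 := Real.rpow_le_rpow (by positivity) h3 (by positivity : (0:ℝ) ≤ (n1:ℝ)⁻¹)
    rwa [Real.pow_rpow_inv_natCast (by positivity) hn1.ne'] at h5
  calc L = (L * ((n2:ℝ)/(n1:ℝ))) * ((n1:ℝ)/(n2:ℝ)) := by field_simp
    _ ≤ (sInf S1) ^ ((n1:ℝ)⁻¹) * ((n1:ℝ)/(n2:ℝ)) :=
        mul_le_mul_of_nonneg_right h4 (by positivity)
    _ = ((n1:ℝ)/(n2:ℝ)) * (sInf S1) ^ ((n1:ℝ)⁻¹) := by ring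


lemma capacity_kraus {n1 n2 m : ℕ} (A : Fin m → Matrix (Fin n2) (Fin n1) ℂ) :
    capacity (fun X : Matrix (Fin n1) (Fin n1) ℂ => ∑ i, A i * X * (A i)ᴴ)
      = ((n2:ℝ)/(n1:ℝ))^n2 * sInf {r : ℝ | ∃ X : Matrix (Fin n1) (Fin n1) ℂ,
          X.PosDef ∧ X.det = 1 ∧ r = ((∑ i, A i * X * (A i)ᴴ).det).re} := by
  have ha : (0:ℝ) ≤ ((n2:ℝ)/(n1:ℝ))^n2 := by positivity
  have hcast : ((n2:ℂ)/(n1:ℂ)) = Complex.ofReal ((n2:ℝ)/(n1:ℝ)) := by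
    rw [Complex.ofReal_div]; push_cast; ring
  unfold capacity
  rw [show (((n2:ℝ)/(n1:ℝ))^n2 : ℝ) * sInf {r : ℝ | ∃ X : Matrix (Fin n1) (Fin n1) ℂ,
        X.PosDef ∧ X.det = 1 ∧ r = ((∑ i, A i * X * (A i)ᴴ).det).re}
      = sInf ((((n2:ℝ)/(n1:ℝ))^n2) • {r : ℝ | ∃ X : Matrix (Fin n1) (Fin n1) ℂ,
        X.PosDef ∧ X.det = 1 ∧ r = ((∑ i, A i * X * (A i)ᴴ).det).re}) by
      rw [Real.sInf_smul_of_nonneg ha, smul_eq_mul]]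
  congr 1
  ext r
  simp only [Set.mem_setOf_eq, Set.mem_smul_set, smul_eq_mul, Fintype.card_fin]
  constructor
  · rintro ⟨X, h1, h2, rfl⟩
    refine ⟨((∑ i, A i * X * (A i)ᴴ).det).re, ⟨X, h1, h2, rfl⟩, ?_⟩
    rw [hcast, Matrix.det_smul, Fintype.card_fin, ← Complex.ofReal_pow, Complex.re_ofReal_mul]
  · rintro ⟨s, ⟨X, h1, h2, rfl⟩, rfl⟩
    refine ⟨X, h1, h2, ?_⟩
    rw [hcast, Matrix.det_smul, Fintype.card_fin, ← Complex.ofReal_pow, Complex.re_ofReal_mul]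

end CapacityDualAux

open CapacityDualAux

/-- For a completely positive operator `T : M_{n1}(ℂ) → M_{n2}(ℂ)`
with Kraus operators `A₁, …, A_m` and dual `T*`, one has
`cap(T)^{1/n2} = (n2/n1) · cap(T*)^{1/n1}`. -/
theorem capacity_dual {n1 n2 m : ℕ} (hn1 : 0 < n1) (hn2 : 0 < n2)
    (A : Fin m → Matrix (Fin n2) (Fin n1) ℂ) :
    capacity (fun X : Matrix (Fin n1) (Fin n1) ℂ => ∑ i, A i * X * (A i)ᴴ) ^ ((n2 : ℝ)⁻¹) =
      ((n2 : ℝ) / (n1 : ℝ)) *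
        capacity (fun Y : Matrix (Fin n2) (Fin n2) ℂ => ∑ i, (A i)ᴴ * Y * A i) ^ ((n1 : ℝ)⁻¹) := by
  classical
  have hc2 := capacity_kraus A
  have hc1 := capacity_kraus (fun i => (A i)ᴴ)
  simp only [Matrix.conjTranspose_conjTranspose] at hc1
  rw [hc2, hc1]
  set S2 := {r : ℝ | ∃ X : Matrix (Fin n1) (Fin n1) ℂ, X.PosDef ∧ X.det = 1 ∧
      r = ((∑ i, A i * X * (A i)ᴴ).det).re} with hS2
  set S1 := {r : ℝ | ∃ Y : Matrix (Fin n2) (Fin n2) ℂ, Y.PosDef ∧ Y.det = 1 ∧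
      r = ((∑ i, (A i)ᴴ * Y * A i).det).re} with hS1
  have hd2 : 0 ≤ sInf S2 := Real.sInf_nonneg ?lb2
  case lb2 =>
    rintro r ⟨X, hX, -, rfl⟩
    exact det_re_nonneg (psd_sum fun i => hX.posSemidef.mul_mul_conjTranspose_same (A i))
  have hd1 : 0 ≤ sInf S1 := Real.sInf_nonneg ?lb1
  case lb1 =>
    rintro r ⟨Y, hY, -, rfl⟩
    exact det_re_nonneg (psd_sum fun i => hY.posSemidef.conjTranspose_mul_mul_same (A i))
  have e1 := key hn1 hn2 A
  have e2 := key hn2 hn1 (fun i => (A i)ᴴ)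
  simp only [Matrix.conjTranspose_conjTranspose] at e2
  rw [← hS1, ← hS2] at e1 e2
  have heq : (sInf S2) ^ ((n2:ℝ)⁻¹) = ((n1:ℝ)/(n2:ℝ)) * (sInf S1) ^ ((n1:ℝ)⁻¹) := by
    refine le_antisymm e1 ?_
    have hmul := mul_le_mul_of_nonneg_left e2 (by positivity : (0:ℝ) ≤ (n1:ℝ)/(n2:ℝ))
    have hn1' : ((n1:ℝ)) ≠ 0 := Nat.cast_ne_zero.mpr hn1.ne'
    have hn2' : ((n2:ℝ)) ≠ 0 := Nat.cast_ne_zero.mpr hn2.ne'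
    calc ((n1:ℝ)/(n2:ℝ)) * (sInf S1) ^ ((n1:ℝ)⁻¹)
        ≤ ((n1:ℝ)/(n2:ℝ)) * (((n2:ℝ)/(n1:ℝ)) * (sInf S2) ^ ((n2:ℝ)⁻¹)) := hmul
      _ = (sInf S2) ^ ((n2:ℝ)⁻¹) := by field_simp
  rw [Real.mul_rpow (by positivity) hd2, Real.mul_rpow (by positivity) hd1,
    Real.pow_rpow_inv_natCast (by positivity) hn2.ne',
    Real.pow_rpow_inv_natCast (by positivity) hn1.ne', heq]
end

section
/- Let (B,p) be a Brascamp–Lieb datum with p_i = c_i/d for positive integers c_i, d, B_i : ℝ^n → ℝ^{n_i}, and n = ∑_{i=1}^m c_i n_i / d, and let T_{(B,p)} : M_{nd}(ℂ) → M_n(ℂ) be the Brascamp–Lieb operator of (B,p). Then the inequality dim(V) ≤ ∑_{j=1}^m p_j · dim(B_j V) holds for all linear subspaces V of ℝ^n if and only if the dual operator T_{(B,p)}* is fractional-rank non-decreasing, i.e., rank(T_{(B,p)}*(X))/(nd) ≥ rank(X)/n for every positive semidefinite X ∈ M_n(ℂ). -/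
open Matrix BigOperators
open scoped ComplexOrder

/-- The index set of the Brascamp–Lieb operator: the `j`-th block row of the stacked matrix
`A` corresponds to a pair `(i, t)` with `t < cᵢ`, and carries `nd i` coordinates.  The total
cardinality is `∑ cᵢ · nd i = n·d`. -/
abbrev blIndex (m : ℕ) (nd c : Fin m → ℕ) : Type := (i : Fin m) × (Fin (nd i) × Fin (c i))

/-- The dual Brascamp–Lieb operator `T_{(B,p)}^* : M_n(ℂ) → M_{nd}(ℂ)`,
`T_{(B,p)}^*(Y) = ∑_j Aⱼ Y Aⱼᴴ`, the block-diagonal matrix whose block at `(i,t)` is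
`Bᵢ Y Bᵢᴴ`. -/
noncomputable def blOpDual {m n : ℕ} (nd c : Fin m → ℕ)
    (B : ∀ i, Matrix (Fin (nd i)) (Fin n) ℝ) (Y : Matrix (Fin n) (Fin n) ℂ) :
    Matrix (blIndex m nd c) (blIndex m nd c) ℂ :=
  Matrix.blockDiagonal' fun i =>
    Matrix.blockDiagonal fun _ : Fin (c i) =>
      ((B i).map Complex.ofReal) * Y * ((B i).map Complex.ofReal)ᴴ


open Module Submodule

section PiProd

variable {K : Type*} [Field K]

/-- The product of two submodules is equivalent to the product of the subtypes. -/
noncomputable def prodSubmoduleEquiv {M N : Type*} [AddCommGroup M] [AddCommGroup N]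
    [Module K M] [Module K N] (p : Submodule K M) (q : Submodule K N) :
    (p.prod q) ≃ₗ[K] p × q where
  toFun x := (⟨x.1.1, x.2.1⟩, ⟨x.1.2, x.2.2⟩)
  invFun x := ⟨(x.1.1, x.2.1), ⟨x.1.2, x.2.2⟩⟩
  left_inv x := rfl
  right_inv x := rfl
  map_add' x y := rfl
  map_smul' r x := rfl

lemma finrank_prod_submodule {M N : Type*} [AddCommGroup M] [AddCommGroup N]
    [Module K M] [Module K N] [FiniteDimensional K M] [FiniteDimensional K N]
    (p : Submodule K M) (q : Submodule K N) :
    finrank K (p.prod q) = finrank K p + finrank K q := by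
  rw [(prodSubmoduleEquiv p q).finrank_eq, Module.finrank_prod]

noncomputable def piSubmoduleEquiv {ι : Type*} {φ : ι → Type*} [∀ i, AddCommGroup (φ i)]
    [∀ i, Module K (φ i)] (p : ∀ i, Submodule K (φ i)) :
    (Submodule.pi Set.univ p) ≃ₗ[K] ∀ i, p i where
  toFun x i := ⟨x.1 i, x.2 i (Set.mem_univ i)⟩
  invFun g := ⟨fun i => g i, fun i _ => (g i).2⟩
  left_inv x := rfl
  right_inv g := rfl
  map_add' x y := rfl
  map_smul' r x := rfl

lemma finrank_pi_submodule {ι : Type} [Fintype ι] {φ : ι → Type} [∀ i, AddCommGroup (φ i)]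
    [∀ i, Module K (φ i)] [∀ i, FiniteDimensional K (φ i)] (p : ∀ i, Submodule K (φ i)) :
    finrank K (Submodule.pi Set.univ p) = ∑ i, finrank K (p i) := by
  rw [(piSubmoduleEquiv p).finrank_eq, Module.finrank_pi_fintype]

lemma range_pi_comp_proj {ι : Type} [Fintype ι] {φ ψ : ι → Type} [∀ i, AddCommGroup (φ i)]
    [∀ i, AddCommGroup (ψ i)] [∀ i, Module K (φ i)] [∀ i, Module K (ψ i)]
    (f : ∀ i, φ i →ₗ[K] ψ i) :
    LinearMap.range (LinearMap.pi fun i => (f i).comp (LinearMap.proj i)) =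
      Submodule.pi Set.univ (fun i => LinearMap.range (f i)) := by
  ext g
  constructor
  · rintro ⟨v, rfl⟩ i _
    exact ⟨v i, rfl⟩
  · intro h
    choose v hv using fun i => h i (Set.mem_univ i)
    exact ⟨v, funext fun i => hv i⟩

lemma range_prodMap_eq {M N M' N' : Type*} [AddCommGroup M] [AddCommGroup N] [AddCommGroup M']
    [AddCommGroup N'] [Module K M] [Module K N] [Module K M'] [Module K N']
    (f : M →ₗ[K] M') (g : N →ₗ[K] N') :
    LinearMap.range (f.prodMap g) = (LinearMap.range f).prod (LinearMap.range g) := by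
  ext x
  constructor
  · rintro ⟨v, rfl⟩
    exact ⟨⟨v.1, rfl⟩, ⟨v.2, rfl⟩⟩
  · rintro ⟨⟨a, ha⟩, ⟨b, hb⟩⟩
    exact ⟨(a, b), by simp [LinearMap.prodMap_apply, ha, hb]⟩

/-- Rank–nullity for the second projection restricted to a submodule of a product. -/
lemma finrank_eq_map_snd_add_comap_inl {M N : Type*} [AddCommGroup M] [AddCommGroup N]
    [Module K M] [Module K N] [FiniteDimensional K M] [FiniteDimensional K N]
    (U : Submodule K (M × N)) :
    finrank K U = finrank K (U.map (LinearMap.snd K M N)) +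
      finrank K (U.comap (LinearMap.inl K M N)) := by
  have h := LinearMap.finrank_range_add_finrank_ker ((LinearMap.snd K M N).domRestrict U)
  rw [LinearMap.range_domRestrict] at h
  have e : (LinearMap.ker ((LinearMap.snd K M N).domRestrict U)) ≃ₗ[K]
      (U.comap (LinearMap.inl K M N)) := by
    refine
      { toFun := fun y => ⟨y.1.1.1, ?_⟩
        invFun := fun x => ⟨⟨(x.1, 0), x.2⟩, rfl⟩
        left_inv := fun y => ?_
        right_inv := fun x => rfl
        map_add' := fun y z => rfl
        map_smul' := fun r y => rfl }
    · have h2 : (y.1 : M × N).2 = 0 := y.2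
      have : ((y.1 : M × N).1, (0 : N)) = (y.1 : M × N) := by
        rw [← h2]
      simpa [Submodule.mem_comap, LinearMap.inl_apply, this] using y.1.2
    · apply Subtype.ext
      apply Subtype.ext
      have h2 : (y.1 : M × N).2 = 0 := y.2
      exact Prod.ext rfl h2.symm
  have h3 : finrank K (LinearMap.ker ((LinearMap.snd K M N).domRestrict U)) = finrank K (U.comap (LinearMap.inl K M N)) := e.finrank_eq
  rw [h3] at h
  omega

end PiProd

section Doubling

variable {ι : Type} [Fintype ι] {M : Type} {N : ι → Type}
  [AddCommGroup M] [∀ i, AddCommGroup (N i)]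
  [Module ℝ M] [∀ i, Module ℝ (N i)]
  [FiniteDimensional ℝ M] [∀ i, FiniteDimensional ℝ (N i)]

lemma doubling (f : ∀ i, M →ₗ[ℝ] N i) (p : ι → ℝ) (hp : ∀ i, 0 ≤ p i)
    (H : ∀ V : Submodule ℝ M, (finrank ℝ V : ℝ) ≤ ∑ j, p j * finrank ℝ (V.map (f j)))
    (W : Submodule ℝ (M × M)) :
    (finrank ℝ W : ℝ) ≤ ∑ j, p j * finrank ℝ (W.map ((f j).prodMap (f j))) := by
  set W₁ := W.comap (LinearMap.inl ℝ M M) with hW₁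
  set W₂ := W.map (LinearMap.snd ℝ M M) with hW₂
  have hdim : finrank ℝ W = finrank ℝ W₂ + finrank ℝ W₁ := finrank_eq_map_snd_add_comap_inl W
  have key : ∀ j, finrank ℝ (W₁.map (f j)) + finrank ℝ (W₂.map (f j)) ≤
      finrank ℝ (W.map ((f j).prodMap (f j))) := by
    intro j
    set U := W.map ((f j).prodMap (f j)) with hU
    have h1 : W₁.map (f j) ≤ U.comap (LinearMap.inl ℝ (N j) (N j)) := by
      rintro x ⟨a, ha, rfl⟩
      exact ⟨(a, 0), ha, by simp⟩
    have h2 : U.map (LinearMap.snd ℝ (N j) (N j)) = W₂.map (f j) := by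
      have hcomp : (LinearMap.snd ℝ (N j) (N j)).comp ((f j).prodMap (f j)) =
          (f j).comp (LinearMap.snd ℝ M M) := LinearMap.ext fun x => rfl
      rw [hU, hW₂, ← Submodule.map_comp, hcomp, Submodule.map_comp]
    have h3 := finrank_eq_map_snd_add_comap_inl U
    rw [h2] at h3
    have h4 : finrank ℝ (W₁.map (f j)) ≤ finrank ℝ (U.comap (LinearMap.inl ℝ (N j) (N j))) :=
      Submodule.finrank_mono h1
    omega
  calc (finrank ℝ W : ℝ) = (finrank ℝ W₂ : ℝ) + (finrank ℝ W₁ : ℝ) := by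
        rw [hdim]; push_cast; ring
    _ ≤ (∑ j, p j * finrank ℝ (W₂.map (f j))) + ∑ j, p j * finrank ℝ (W₁.map (f j)) :=
        add_le_add (H W₂) (H W₁)
    _ = ∑ j, p j * ((finrank ℝ (W₁.map (f j)) : ℝ) + finrank ℝ (W₂.map (f j))) := by
        rw [← Finset.sum_add_distrib]; congr 1; funext j; ring
    _ ≤ ∑ j, p j * finrank ℝ (W.map ((f j).prodMap (f j))) := by
        apply Finset.sum_le_sum
        intro j _
        apply mul_le_mul_of_nonneg_left _ (hp j)
        exact_mod_cast key j

end Doubling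

section Complexify

/-- Real-imaginary decomposition of `ℂⁿ` as a real linear equivalence. -/
noncomputable def reImEquiv (n : ℕ) : (Fin n → ℂ) ≃ₗ[ℝ] (Fin n → ℝ) × (Fin n → ℝ) where
  toFun z := (fun i => (z i).re, fun i => (z i).im)
  invFun x := fun i => ⟨x.1 i, x.2 i⟩
  left_inv z := rfl
  right_inv x := rfl
  map_add' z w := by
    refine Prod.ext ?_ ?_ <;> funext i <;> simp
  map_smul' r z := by
    refine Prod.ext ?_ ?_ <;> funext i <;> simp [Complex.smul_re, Complex.smul_im]

lemma reImEquiv_comm {k n : ℕ} (A : Matrix (Fin k) (Fin n) ℝ) (z : Fin n → ℂ) :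
    reImEquiv k ((A.map Complex.ofReal).mulVec z) =
      ((A.mulVecLin).prodMap (A.mulVecLin)) (reImEquiv n z) := by
  refine Prod.ext ?_ ?_ <;> funext i <;>
    simp [reImEquiv, Matrix.mulVec, dotProduct, Matrix.mulVecLin,
      Complex.re_sum, Complex.im_sum, Complex.mul_re, Complex.mul_im]

lemma reImEquiv_comp_eq {k n : ℕ} (A : Matrix (Fin k) (Fin n) ℝ) :
    (reImEquiv k).toLinearMap.comp
        (((A.map Complex.ofReal).mulVecLin).restrictScalars ℝ) =
      ((A.mulVecLin).prodMap (A.mulVecLin)).comp (reImEquiv n).toLinearMap :=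
  LinearMap.ext fun z => reImEquiv_comm A z

lemma restrictScalars_map {n k : ℕ} (g : (Fin n → ℂ) →ₗ[ℂ] (Fin k → ℂ))
    (W : Submodule ℂ (Fin n → ℂ)) :
    (W.restrictScalars ℝ).map (g.restrictScalars ℝ) = (W.map g).restrictScalars ℝ := by
  ext x
  simp [Submodule.mem_map]

lemma two_mul_finrank_eq {n : ℕ} (W : Submodule ℂ (Fin n → ℂ)) :
    finrank ℝ ((W.restrictScalars ℝ).map (reImEquiv n).toLinearMap) = 2 * finrank ℂ W := by
  rw [LinearEquiv.finrank_map_eq (reImEquiv n) (W.restrictScalars ℝ)]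
  have e0 : (W.restrictScalars ℝ) ≃ₗ[ℝ] W :=
    { toFun := fun x => ⟨x.1, x.2⟩, invFun := fun x => ⟨x.1, x.2⟩,
      left_inv := fun x => rfl, right_inv := fun x => rfl,
      map_add' := fun x y => rfl, map_smul' := fun r x => rfl }
  have h1 : finrank ℝ (W.restrictScalars ℝ) = finrank ℝ W := LinearEquiv.finrank_eq e0
  rw [h1, ← Module.finrank_mul_finrank ℝ ℂ W, Complex.finrank_real_complex]

lemma bridge_map {k n : ℕ} (A : Matrix (Fin k) (Fin n) ℝ) (W : Submodule ℂ (Fin n → ℂ)) :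
    ((W.restrictScalars ℝ).map (reImEquiv n).toLinearMap).map
        ((A.mulVecLin).prodMap (A.mulVecLin)) =
      ((W.map (A.map Complex.ofReal).mulVecLin).restrictScalars ℝ).map
        (reImEquiv k).toLinearMap := by
  rw [← Submodule.map_comp, ← reImEquiv_comp_eq, Submodule.map_comp, restrictScalars_map]

lemma finrank_map_complex_eq {k n : ℕ} (A : Matrix (Fin k) (Fin n) ℝ)
    (W : Submodule ℂ (Fin n → ℂ)) :
    finrank ℝ (((W.restrictScalars ℝ).map (reImEquiv n).toLinearMap).map
        ((A.mulVecLin).prodMap (A.mulVecLin))) =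
      2 * finrank ℂ (W.map (A.map Complex.ofReal).mulVecLin) := by
  rw [bridge_map, two_mul_finrank_eq]

end Complexify

section ComplexH

lemma complexH {m n : ℕ} {nd : Fin m → ℕ} (B : ∀ i, Matrix (Fin (nd i)) (Fin n) ℝ)
    (p : Fin m → ℝ) (hp : ∀ i, 0 ≤ p i)
    (H : ∀ V : Submodule ℝ (Fin n → ℝ),
      (finrank ℝ V : ℝ) ≤ ∑ j, p j * finrank ℝ (V.map (B j).mulVecLin))
    (W : Submodule ℂ (Fin n → ℂ)) :
    (finrank ℂ W : ℝ) ≤ ∑ j, p j * finrank ℂ (W.map ((B j).map Complex.ofReal).mulVecLin) := by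
  have hD := doubling (fun j => (B j).mulVecLin) p hp H
    ((W.restrictScalars ℝ).map (reImEquiv n).toLinearMap)
  rw [two_mul_finrank_eq] at hD
  have heq : ∀ j : Fin m, finrank ℝ (((W.restrictScalars ℝ).map (reImEquiv n).toLinearMap).map
      ((B j).mulVecLin.prodMap (B j).mulVecLin)) =
      2 * finrank ℂ (W.map ((B j).map Complex.ofReal).mulVecLin) :=
    fun j => finrank_map_complex_eq (B j) W
  simp only [heq] at hD
  push_cast at hD
  have h2 : ∑ j, p j * (2 * (finrank ℂ (W.map ((B j).map Complex.ofReal).mulVecLin) : ℝ)) =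
      2 * ∑ j, p j * (finrank ℂ (W.map ((B j).map Complex.ofReal).mulVecLin) : ℝ) := by
    rw [Finset.mul_sum]
    exact Finset.sum_congr rfl fun j _ => by ring
  rw [h2] at hD
  linarith

end ComplexH

section BlockRank

variable {K : Type} [Field K]

lemma mulVecLin_blockDiagonal' {ι : Type} [Fintype ι] [DecidableEq ι] {κ μ : ι → Type}
    [∀ i, Fintype (κ i)] [∀ i, Fintype (μ i)] (M : ∀ i, Matrix (κ i) (μ i) K) :
    (blockDiagonal' M).mulVecLin =
      ((LinearEquiv.piCurry K fun i (_ : κ i) => K).symm.toLinearMap).comp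
        ((LinearMap.pi fun i => (M i).mulVecLin.comp (LinearMap.proj i)).comp
          (LinearEquiv.piCurry K fun i (_ : μ i) => K).toLinearMap) := by
  apply LinearMap.ext
  intro v
  funext x
  obtain ⟨i, j⟩ := x
  simp only [LinearMap.comp_apply, LinearEquiv.coe_coe, LinearEquiv.piCurry_symm_apply,
    LinearEquiv.piCurry_apply, LinearMap.pi_apply, LinearMap.proj_apply, Matrix.mulVecLin_apply]
  have : (blockDiagonal' M).mulVec v ⟨i, j⟩ =
      ∑ i' : ι, ∑ j' : μ i', blockDiagonal' M ⟨i, j⟩ ⟨i', j'⟩ * v ⟨i', j'⟩ := by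
    rw [Matrix.mulVec, dotProduct, ← Finset.univ_sigma_univ, Finset.sum_sigma]
  rw [this, Finset.sum_eq_single_of_mem i (Finset.mem_univ i)]
  · simp [Sigma.uncurry, Matrix.mulVec, dotProduct, Sigma.curry]
  · intro i' _ hne
    apply Finset.sum_eq_zero
    intro j' _
    rw [blockDiagonal'_apply_ne _ _ _ (Ne.symm hne), zero_mul]

lemma rank_blockDiagonal' {ι : Type} [Fintype ι] [DecidableEq ι] {κ μ : ι → Type}
    [∀ i, Fintype (κ i)] [∀ i, Fintype (μ i)] (M : ∀ i, Matrix (κ i) (μ i) K) :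
    (blockDiagonal' M).rank = ∑ i, (M i).rank := by
  rw [Matrix.rank, mulVecLin_blockDiagonal', LinearMap.range_comp, LinearMap.range_comp,
    LinearEquiv.range, Submodule.map_top]
  have hr := range_pi_comp_proj (K := K) (φ := fun i => μ i → K) (ψ := fun i => κ i → K) (fun i => (M i).mulVecLin)
  rw [hr]
  have h := LinearEquiv.finrank_map_eq
    (LinearEquiv.piCurry K fun i (_ : κ i) => K).symm
    (Submodule.pi Set.univ fun i => LinearMap.range (M i).mulVecLin)
  rw [h, finrank_pi_submodule]
  rfl

lemma rank_blockDiagonal {o κ : Type} [Fintype o] [DecidableEq o] [Fintype κ] [DecidableEq κ]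
    (M : o → Matrix κ κ K) :
    (blockDiagonal M).rank = ∑ i, (M i).rank := by
  rw [← blockDiagonal'_submatrix_eq_blockDiagonal]
  rw [show (Prod.toSigma ∘ Prod.swap : κ × o → Σ _ : o, κ) =
      ⇑((Equiv.prodComm κ o).trans (Equiv.sigmaEquivProd o κ).symm) from
      funext fun x => rfl,
    Matrix.rank_submatrix, rank_blockDiagonal']

end BlockRank

section RankMap

/-- The rank of a real matrix is unchanged by viewing it as a complex matrix. -/
lemma rank_map_ofReal {k l : ℕ} (A : Matrix (Fin k) (Fin l) ℝ) :
    (A.map Complex.ofReal).rank = A.rank := by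
  have h2 : 2 * (A.map Complex.ofReal).rank = 2 * A.rank := by
    have htop : LinearMap.range (A.map Complex.ofReal).mulVecLin =
        (⊤ : Submodule ℂ (Fin l → ℂ)).map (A.map Complex.ofReal).mulVecLin := by
      rw [Submodule.map_top]
    rw [Matrix.rank, htop, ← finrank_map_complex_eq A ⊤]
    have htop2 : (((⊤ : Submodule ℂ (Fin l → ℂ)).restrictScalars ℝ).map
        (reImEquiv l).toLinearMap) = ⊤ := by
      rw [Submodule.restrictScalars_top, Submodule.map_top, LinearEquiv.range]
    rw [htop2, Submodule.map_top, range_prodMap_eq, finrank_prod_submodule]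
    rw [Matrix.rank]
    ring
  omega

/-- For a PSD matrix `X`, `rank (A X Aᴴ) = rank (A X)`. -/
lemma rank_conj_psd {k n : ℕ} (A : Matrix (Fin k) (Fin n) ℂ) {X : Matrix (Fin n) (Fin n) ℂ}
    (hX : X.PosSemidef) : (A * X * Aᴴ).rank = (A * X).rank := by
  obtain ⟨S, hherm, rfl⟩ : ∃ S : Matrix (Fin n) (Fin n) ℂ, Sᴴ = S ∧ S * S = X :=
    by
      open scoped MatrixOrder Matrix.Norms.L2Operator in
      exact ⟨CFC.sqrt X, (IsSelfAdjoint.of_nonneg (CFC.sqrt_nonneg X)).star_eq, CFC.sqrt_mul_sqrt_self X hX.nonneg⟩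
  have h1 : A * (S * S) * Aᴴ = (A * S) * (A * S)ᴴ := by
    rw [conjTranspose_mul, hherm]
    simp only [Matrix.mul_assoc]
  have h2 : (A * (S * S) * Aᴴ).rank = (A * S).rank := by
    rw [h1, rank_self_mul_conjTranspose]
  have h3 : (A * (S * S)).rank ≤ (A * S).rank := by
    rw [← Matrix.mul_assoc]
    exact Matrix.rank_mul_le_left _ _
  have h4 : (A * (S * S) * Aᴴ).rank ≤ (A * (S * S)).rank := Matrix.rank_mul_le_left _ _
  omega

lemma rank_mul_eq_finrank_map {k n : ℕ} (A : Matrix (Fin k) (Fin n) ℂ)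
    (X : Matrix (Fin n) (Fin n) ℂ) :
    (A * X).rank = finrank ℂ ((LinearMap.range X.mulVecLin).map A.mulVecLin) := by
  rw [Matrix.rank, Matrix.mulVecLin_mul, LinearMap.range_comp]

end RankMap

section Main


lemma map_ofReal_mul {a b c : ℕ} (L : Matrix (Fin a) (Fin b) ℝ) (M : Matrix (Fin b) (Fin c) ℝ) :
    (L * M).map Complex.ofReal = L.map Complex.ofReal * M.map Complex.ofReal := by
  ext i j
  simp [Matrix.mul_apply, Matrix.map_apply]

lemma rank_blOpDual {m n : ℕ} (nd c : Fin m → ℕ) (B : ∀ i, Matrix (Fin (nd i)) (Fin n) ℝ)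
    (X : Matrix (Fin n) (Fin n) ℂ) :
    (blOpDual nd c B X).rank = ∑ i, c i *
      ((B i).map Complex.ofReal * X * ((B i).map Complex.ofReal)ᴴ).rank := by
  rw [blOpDual, rank_blockDiagonal']
  refine Finset.sum_congr rfl fun i _ => ?_
  rw [rank_blockDiagonal]
  simp [Finset.sum_const, Finset.card_univ, mul_comm]

end Main


/-- For a Brascamp–Lieb datum `(B, p)` with `pᵢ = cᵢ/d` and
`n = ∑ cᵢ nᵢ / d`, the inequality `dim V ≤ ∑ pⱼ dim(Bⱼ V)` holds for all subspaces
`V ⊆ ℝⁿ` iff the dual operator `T_{(B,p)}^*` is fractional-rank non-decreasing,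
i.e. `rank(T^*(X))/(nd) ≥ rank(X)/n` for every PSD `X ∈ M_n(ℂ)`. -/
theorem blOpDual_frac_rank_nondecreasing_iff {m n : ℕ} (nd c : Fin m → ℕ) (d : ℕ)
    (hn : 0 < n) (hd : 0 < d) (hc : ∀ i, 0 < c i)
    (B : ∀ i, Matrix (Fin (nd i)) (Fin n) ℝ) (p : Fin m → ℝ)
    (hp : ∀ i, p i = (c i : ℝ) / d)
    (hdim : n * d = ∑ i, c i * nd i) :
    (∀ V : Submodule ℝ (Fin n → ℝ),
        (Module.finrank ℝ V : ℝ) ≤ ∑ j, p j * Module.finrank ℝ (V.map (B j).mulVecLin)) ↔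
      (∀ X : Matrix (Fin n) (Fin n) ℂ, X.PosSemidef →
        (n * d) * X.rank ≤ n * (blOpDual nd c B X).rank) := by
  have key : ∀ (r : ℕ) (f : Fin m → ℕ),
      (((r : ℝ) ≤ ∑ j, p j * (f j : ℝ)) ↔ d * r ≤ ∑ j, c j * f j) := by
    intro r f
    have hsum : ∑ j, p j * (f j : ℝ) = ((∑ j, c j * f j : ℕ) : ℝ) / d := by
      push_cast
      rw [Finset.sum_div]
      exact Finset.sum_congr rfl fun j _ => by rw [hp j]; ring
    rw [hsum, le_div_iff₀ (by exact_mod_cast hd : (0:ℝ) < (d:ℝ))]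
    rw [show (r : ℝ) * d = ((d * r : ℕ) : ℝ) by push_cast; ring, Nat.cast_le]
  constructor
  · intro H X hX
    have hp0 : ∀ j, 0 ≤ p j := fun j => by
      rw [hp j]; positivity
    have hC := complexH B p hp0 H (LinearMap.range X.mulVecLin)
    have hblocks : ∀ j, Module.finrank ℂ ((LinearMap.range X.mulVecLin).map
        ((B j).map Complex.ofReal).mulVecLin) =
        ((B j).map Complex.ofReal * X * ((B j).map Complex.ofReal)ᴴ).rank := by
      intro j
      rw [rank_conj_psd _ hX, rank_mul_eq_finrank_map]
    have hineq : (X.rank : ℝ) ≤ ∑ j, p j *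
        (((B j).map Complex.ofReal * X * ((B j).map Complex.ofReal)ᴴ).rank : ℝ) := by
      refine le_of_le_of_eq hC ?_
      exact Finset.sum_congr rfl fun j _ => by rw [hblocks j]
    have hnat := (key X.rank _).mp hineq
    rw [rank_blOpDual, mul_assoc]
    exact Nat.mul_le_mul le_rfl hnat
  · intro Hrank V
    let r := Module.finrank ℝ V
    let b := Module.finBasis ℝ V
    let M : Matrix (Fin n) (Fin r) ℝ := Matrix.of fun i j => (b j : Fin n → ℝ) i
    have hMrange : LinearMap.range M.mulVecLin = V := by
      rw [Matrix.range_mulVecLin]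
      have hT : M.col = fun j => (b j : Fin n → ℝ) := rfl
      rw [hT]
      have himg : Set.range (fun j => (b j : Fin n → ℝ)) = V.subtype '' Set.range b := by
        rw [← Set.range_comp]; rfl
      rw [himg, Submodule.span_image, b.span_eq, Submodule.map_subtype_top]
    set M' := M.map Complex.ofReal with hM'
    have hXpsd : (M' * M'ᴴ).PosSemidef := Matrix.posSemidef_self_mul_conjTranspose M'
    have h := Hrank (M' * M'ᴴ) hXpsd
    have hr1 : (M' * M'ᴴ).rank = r := by
      rw [Matrix.rank_self_mul_conjTranspose, hM', rank_map_ofReal, Matrix.rank, hMrange]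
    have hb : ∀ j, ((B j).map Complex.ofReal * (M' * M'ᴴ) * ((B j).map Complex.ofReal)ᴴ).rank =
        Module.finrank ℝ (V.map (B j).mulVecLin) := by
      intro j
      have hfac : (B j).map Complex.ofReal * (M' * M'ᴴ) * ((B j).map Complex.ofReal)ᴴ =
          ((B j * M).map Complex.ofReal) * (((B j) * M).map Complex.ofReal)ᴴ := by
        rw [map_ofReal_mul, hM', conjTranspose_mul]
        simp only [Matrix.mul_assoc]
      rw [hfac, Matrix.rank_self_mul_conjTranspose, rank_map_ofReal, Matrix.rank,
        Matrix.mulVecLin_mul, LinearMap.range_comp, hMrange]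
    rw [rank_blOpDual, hr1] at h
    simp only [hb] at h
    rw [mul_assoc] at h
    have h2 := Nat.le_of_mul_le_mul_left h hn
    exact (key r _).mpr h2
end

section
/- Let T : M_{n1}(ℂ) → M_{n2}(ℂ) be a completely positive operator with cap(T) > 0. Then for every ε > 0 there exists an operator scaling T' of T, i.e., T'(X) = B·T(C X C†)·B† for some invertible n2×n2 matrix B and invertible n1×n1 matrix C, such that ds(T') ≤ ε. -/
open Matrix BigOperators
open scoped ComplexOrder

/-- The distance to double stochasticity of the completely positive operator with Kraus
operators `A₁, …, A_m`:
`ds(T) = tr[(T((n2/n1)·I) − I)²] + tr[(T*(I) − I)²]`. -/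
noncomputable def dsDist {n1 n2 m : ℕ} (A : Fin m → Matrix (Fin n2) (Fin n1) ℂ) : ℝ :=
  (Matrix.trace ((((n2 : ℂ) / (n1 : ℂ)) • (∑ i, A i * (A i)ᴴ) - 1) ^ 2)).re +
    (Matrix.trace ((∑ i, (A i)ᴴ * A i - 1) ^ 2)).re

set_option maxHeartbeats 1000000

lemma logA {x : ℝ} (hx : 1 ≤ x) : Real.log x ≤ x - 1 - (x-1)^2/(2*x) := by
  have h0 : (0:ℝ) < x := lt_of_lt_of_le one_pos hx
  have key : ∀ y ∈ Set.Ici (1:ℝ), Real.log y ≤ y/2 - (2*y)⁻¹ := by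
    have hmono : MonotoneOn (fun y : ℝ => y/2 - (2*y)⁻¹ - Real.log y) (Set.Ici 1) := by
      have hder : ∀ y : ℝ, 0 < y → HasDerivAt (fun y : ℝ => y/2 - (2*y)⁻¹ - Real.log y)
          (1/2 + 2/(2*y)^2 - y⁻¹) y := by
        intro y hy
        have h1 : HasDerivAt (fun y : ℝ => y/2) (1/2) y := by
          simpa using (hasDerivAt_id y).div_const 2
        have h2 : HasDerivAt (fun y : ℝ => (2*y)⁻¹) (-(2/(2*y)^2)) y := by
          have := ((hasDerivAt_id y).const_mul 2).inv (by positivity)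
          exact this.congr_deriv (by simp only [id, mul_one, neg_div])
        have h3 : HasDerivAt Real.log y⁻¹ y := Real.hasDerivAt_log (ne_of_gt hy)
        have := (h1.sub h2).sub h3
        exact this.congr_deriv (by ring)
      apply monotoneOn_of_deriv_nonneg (convex_Ici 1)
      · apply ContinuousOn.sub
        · apply ContinuousOn.sub
          · fun_prop
          · apply ContinuousOn.inv₀ (by fun_prop)
            intro y hy; simp only [Set.mem_Ici] at hy; positivity
        · apply ContinuousOn.log (by fun_prop)
          intro y hy; simp only [Set.mem_Ici] at hy; positivity
      · intro y hy
        rw [interior_Ici] at hy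
        have hy1 : (0:ℝ) < y := lt_trans one_pos hy
        exact ((hder y hy1).differentiableAt).differentiableWithinAt
      · intro y hy
        rw [interior_Ici] at hy
        have hy1 : (0:ℝ) < y := lt_trans one_pos hy
        rw [(hder y hy1).deriv]
        have h4 : (0:ℝ) < (2*y)^2 := by positivity
        rw [← sub_nonneg]
        have h6 : 1/2 + 2/(2*y)^2 - y⁻¹ - 0 = (y-1)^2/(2*y^2) := by
          field_simp <;> ring
        rw [h6]; positivity
    intro y hy
    have := hmono (Set.mem_Ici.mpr le_rfl) hy (Set.mem_Ici.mp hy)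
    simp only [Real.log_one] at this
    nlinarith [this]
  have := key x hx
  have h2 : x - 1 - (x-1)^2/(2*x) = x/2 - (2*x)⁻¹ := by field_simp; ring
  rw [h2]; exact this

lemma logB {x : ℝ} (h0 : 0 < x) (h1 : x ≤ 1) : Real.log x ≤ x - 1 - (x-1)^2/2 := by
  have hmono : AntitoneOn (fun y : ℝ => y - 1 - (y-1)^2/2 - Real.log y) (Set.Ioc 0 1) := by
    have hder : ∀ y : ℝ, 0 < y → HasDerivAt (fun y : ℝ => y - 1 - (y-1)^2/2 - Real.log y)
        (1 - (y-1) - y⁻¹) y := by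
      intro y hy
      have h1 : HasDerivAt (fun y : ℝ => y - 1) 1 y := by
        simpa using (hasDerivAt_id y).sub_const 1
      have h2 : HasDerivAt (fun y : ℝ => (y-1)^2/2) (y-1) y := by
        have := (h1.pow 2).div_const 2
        simpa [mul_comm] using this
      have h3 : HasDerivAt Real.log y⁻¹ y := Real.hasDerivAt_log (ne_of_gt hy)
      exact (h1.sub h2).sub h3
    apply antitoneOn_of_deriv_nonpos (convex_Ioc 0 1)
    · apply ContinuousOn.sub
      · fun_prop
      · apply ContinuousOn.log (by fun_prop)
        intro y hy; exact ne_of_gt hy.1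
    · intro y hy
      rw [interior_Ioc] at hy
      exact ((hder y hy.1).differentiableAt).differentiableWithinAt
    · intro y hy
      rw [interior_Ioc] at hy
      rw [(hder y hy.1).deriv]
      nlinarith [mul_inv_cancel₀ (ne_of_gt hy.1), sq_nonneg (y-1), hy.1, hy.2,
        inv_pos.mpr hy.1]
  have := hmono (Set.mem_Ioc.mpr ⟨h0, h1⟩) (Set.mem_Ioc.mpr ⟨one_pos, le_rfl⟩) h1
  simp only [Real.log_one] at this
  nlinarith [this]



lemma logQuad {c x : ℝ} (hc : 1 ≤ c) (h0 : 0 < x) (hxc : x ≤ c) :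
    Real.log x ≤ x - 1 - (x-1)^2/(2*c) := by
  rcases le_or_gt x 1 with h | h
  · have h1 := logB h0 h
    have h2 : (x-1)^2/(2*c) ≤ (x-1)^2/2 := by gcongr <;> linarith
    linarith
  · have h1 := logA h.le
    have h2 : (x-1)^2/(2*c) ≤ (x-1)^2/(2*x) := by gcongr <;> linarith
    linarith

lemma sum_sq_le_of_prod_ge {n : ℕ} {ι : Type} [Fintype ι] (hcard : Fintype.card ι = n)
    (hn : 0 < n) (μ : ι → ℝ) (hnn : ∀ i, 0 ≤ μ i) (hsum : ∑ i, μ i = n) {a : ℝ}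
    (hprod : Real.exp (-a) ≤ ∏ i, μ i) : ∑ i, (μ i - 1)^2 ≤ 2 * n * a := by
  have hpos : ∀ i, 0 < μ i := by
    intro i
    rcases lt_or_eq_of_le (hnn i) with h | h
    · exact h
    · exfalso
      have : ∏ j, μ j = 0 := Finset.prod_eq_zero (Finset.mem_univ i) h.symm
      have := hprod.trans_eq this
      exact absurd this (not_le.mpr (Real.exp_pos _))
  have hle : ∀ i, μ i ≤ n := by
    intro i
    calc μ i ≤ ∑ j, μ j := Finset.single_le_sum (fun j _ => hnn j) (Finset.mem_univ i)
    _ = n := hsum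
  have hlog : -a ≤ Real.log (∏ i, μ i) := by
    calc -a = Real.log (Real.exp (-a)) := (Real.log_exp _).symm
    _ ≤ _ := Real.log_le_log (Real.exp_pos _) hprod
  rw [Real.log_prod (fun i _ => ne_of_gt (hpos i))] at hlog
  have hkey : ∀ i, Real.log (μ i) ≤ μ i - 1 - (μ i - 1)^2/(2*n) := by
    intro i
    exact logQuad (by exact_mod_cast hn) (hpos i) (hle i)
  have hsum2 : ∑ i, Real.log (μ i) ≤ ∑ i, (μ i - 1 - (μ i - 1)^2/(2*n)) :=
    Finset.sum_le_sum (fun i _ => hkey i)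
  have hexp : ∑ i, (μ i - 1 - (μ i - 1)^2/(2*(n:ℝ))) = - (∑ i, (μ i - 1)^2)/(2*(n:ℝ)) := by
    rw [Finset.sum_sub_distrib, Finset.sum_sub_distrib, Finset.sum_const, Finset.card_univ,
      hcard, hsum, ← Finset.sum_div]
    simp
    ring
  rw [hexp] at hsum2
  have hn' : (0:ℝ) < n := by exact_mod_cast hn
  have := hlog.trans hsum2
  rw [neg_div, neg_le_neg_iff] at this
  calc ∑ i, (μ i - 1)^2 = (∑ i, (μ i - 1)^2)/(2*(n:ℝ)) * (2*(n:ℝ)) := by field_simp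
  _ ≤ a * (2*(n:ℝ)) := by
      apply mul_le_mul_of_nonneg_right this (by positivity)
  _ = 2 * n * a := by ring

lemma prod_le_one_of_sum_le {n : ℕ} {ι : Type} [Fintype ι] (hcard : Fintype.card ι = n)
    (μ : ι → ℝ) (hnn : ∀ i, 0 ≤ μ i) (hsum : ∑ i, μ i = n) : ∏ i, μ i ≤ 1 := by
  by_cases hz : ∃ i, μ i = 0
  · obtain ⟨i, hi⟩ := hz
    rw [Finset.prod_eq_zero (Finset.mem_univ i) hi]
    norm_num
  · push_neg at hz
    have hpos : ∀ i, 0 < μ i := fun i => lt_of_le_of_ne (hnn i) (Ne.symm (hz i))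
    have hlog : Real.log (∏ i, μ i) ≤ 0 := by
      rw [Real.log_prod (fun i _ => ne_of_gt (hpos i))]
      calc ∑ i, Real.log (μ i) ≤ ∑ i, (μ i - 1) :=
        Finset.sum_le_sum (fun i _ => Real.log_le_sub_one_of_pos (hpos i))
      _ = 0 := by
        rw [Finset.sum_sub_distrib, Finset.sum_const, Finset.card_univ, hcard, hsum]; simp
    have hppos : 0 < ∏ i, μ i := Finset.prod_pos (fun i _ => hpos i)
    calc ∏ i, μ i = Real.exp (Real.log (∏ i, μ i)) := (Real.exp_log hppos).symm
    _ ≤ Real.exp 0 := Real.exp_le_exp.mpr hlog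
    _ = 1 := Real.exp_zero

variable {n : ℕ}

lemma psd_smul_real {M : Matrix (Fin n) (Fin n) ℂ} (hM : M.PosSemidef) {c : ℝ} (hc : 0 ≤ c) :
    ((c:ℂ) • M).PosSemidef := by
  refine Matrix.PosSemidef.of_dotProduct_mulVec_nonneg ?_ ?_
  · unfold Matrix.IsHermitian
    rw [conjTranspose_smul, hM.1]
    congr 1
    simp
  · intro x
    rw [smul_mulVec, dotProduct_smul, smul_eq_mul]
    have h := hM.dotProduct_mulVec_nonneg x
    have : (0:ℂ) ≤ (c:ℂ) := by
      rw [Complex.le_def]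
      simp [hc]
    exact mul_nonneg this h

lemma posDef_of_psd_det {M : Matrix (Fin n) (Fin n) ℂ} (hM : M.PosSemidef) (h : M.det ≠ 0) :
    M.PosDef := by
  refine Matrix.posDef_iff_dotProduct_mulVec.mpr ⟨hM.1, fun x hx => lt_of_le_of_ne (hM.dotProduct_mulVec_nonneg x) ?_⟩
  intro heq
  apply hx
  have h0 : M *ᵥ x = 0 := (hM.dotProduct_mulVec_zero_iff x).mp heq.symm
  have : M⁻¹ *ᵥ (M *ᵥ x) = x := by
    rw [mulVec_mulVec, Matrix.nonsing_inv_mul M (Ne.isUnit h), one_mulVec]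
  rw [h0, mulVec_zero] at this
  exact this.symm

lemma psd_det_real {M : Matrix (Fin n) (Fin n) ℂ} (hM : M.PosSemidef) :
    M.det = ((M.det).re : ℂ) ∧ 0 ≤ (M.det).re := by
  classical
  have h2 : M.det = ((∏ i, hM.1.eigenvalues i : ℝ) : ℂ) := by
    rw [hM.1.det_eq_prod_eigenvalues]; push_cast; rfl
  have h3 : 0 ≤ ∏ i, hM.1.eigenvalues i :=
    Finset.prod_nonneg (fun i _ => hM.eigenvalues_nonneg i)
  constructor
  · rw [h2, Complex.ofReal_re]
  · rw [h2, Complex.ofReal_re]; exact h3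

lemma herm_trace_eq {M : Matrix (Fin n) (Fin n) ℂ} (hM : M.IsHermitian) :
    M.trace = ((∑ i, hM.eigenvalues i : ℝ) : ℂ) := by
  classical
  conv_lhs => rw [hM.spectral_theorem]
  rw [Unitary.conjStarAlgAut_apply]
  rw [Matrix.trace_mul_cycle]
  have hU : (star (hM.eigenvectorUnitary : Matrix (Fin n) (Fin n) ℂ)) *
      (hM.eigenvectorUnitary : Matrix (Fin n) (Fin n) ℂ) = 1 :=
    (Matrix.mem_unitaryGroup_iff').mp (hM.eigenvectorUnitary).2
  rw [hU, Matrix.one_mul, Matrix.trace_diagonal]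
  push_cast
  rfl

lemma trace_sub_one_sq {M : Matrix (Fin n) (Fin n) ℂ} (hM : M.IsHermitian) :
    (((M - 1)^2).trace).re = ∑ i, (hM.eigenvalues i - 1)^2 := by
  classical
  set U : Matrix (Fin n) (Fin n) ℂ := (hM.eigenvectorUnitary : Matrix (Fin n) (Fin n) ℂ) with hUdef
  set D : Matrix (Fin n) (Fin n) ℂ := diagonal (RCLike.ofReal ∘ hM.eigenvalues) with hDdef
  have hUU : U * star U = 1 := (Matrix.mem_unitaryGroup_iff).mp (hM.eigenvectorUnitary).2
  have hsUU : star U * U = 1 := (Matrix.mem_unitaryGroup_iff').mp (hM.eigenvectorUnitary).2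
  have h1 : M - 1 = U * (D - 1) * star U := by
    rw [Matrix.mul_sub, Matrix.mul_one, Matrix.sub_mul, hUU]
    rw [hUdef, hDdef, ← Unitary.conjStarAlgAut_apply (S := ℂ), ← hM.spectral_theorem]
  have h2 : (M-1)^2 = U * ((D-1) * (D-1)) * star U := by
    rw [h1, pow_two]
    rw [Matrix.mul_assoc (U * (D-1)) (star U) _, ← Matrix.mul_assoc (star U) (U * (D-1)) _,
      ← Matrix.mul_assoc (star U) U (D-1), hsUU, Matrix.one_mul]
    simp only [Matrix.mul_assoc]
  have h3 : (D-1) * (D-1) = diagonal (fun i => ((hM.eigenvalues i : ℂ) - 1)^2) := by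
    rw [hDdef, ← Matrix.diagonal_one, Matrix.diagonal_sub, Matrix.diagonal_mul_diagonal]
    congr 1
    funext i
    simp [pow_two]
  rw [h2, Matrix.trace_mul_cycle, hsUU, Matrix.one_mul, h3, Matrix.trace_diagonal]
  rw [Complex.re_sum]
  congr 1
  funext i
  have : ((hM.eigenvalues i : ℂ) - 1)^2 = (((hM.eigenvalues i - 1)^2 : ℝ) : ℂ) := by push_cast; rfl
  rw [this, Complex.ofReal_re]
set_option maxHeartbeats 1000000



lemma sum_mulVec' {k l : ℕ} {ι : Type} [Fintype ι] (M : ι → Matrix (Fin k) (Fin l) ℂ)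
    (x : Fin l → ℂ) : (∑ i, M i) *ᵥ x = ∑ i, (M i *ᵥ x) := by
  ext j
  simp only [Matrix.mulVec, dotProduct, Finset.sum_apply, Finset.sum_fn,
    Matrix.sum_apply, Finset.sum_mul]
  rw [Finset.sum_comm]

lemma dot_sum' {l : ℕ} {ι : Type} [Fintype ι] (x : Fin l → ℂ) (v : ι → Fin l → ℂ) :
    x ⬝ᵥ (∑ i, v i) = ∑ i, x ⬝ᵥ v i := by
  simp only [dotProduct, Finset.sum_apply, Finset.mul_sum]
  rw [Finset.sum_comm]

section
open scoped MatrixOrder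
noncomputable def Matrix.PosSemidef.sqrt {n : ℕ} {M : Matrix (Fin n) (Fin n) ℂ} (_hM : M.PosSemidef) :
    Matrix (Fin n) (Fin n) ℂ := CFC.sqrt M
lemma Matrix.PosSemidef.posSemidef_sqrt {n : ℕ} {M : Matrix (Fin n) (Fin n) ℂ} (hM : M.PosSemidef) :
    hM.sqrt.PosSemidef := (CFC.sqrt_nonneg M).posSemidef
lemma Matrix.PosSemidef.sqrt_mul_self {n : ℕ} {M : Matrix (Fin n) (Fin n) ℂ} (hM : M.PosSemidef) :
    hM.sqrt * hM.sqrt = M := CFC.sqrt_mul_sqrt_self M hM.nonneg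
end

/-- If `T : M_{n1}(ℂ) → M_{n2}(ℂ)` is completely positive with
`cap(T) > 0`, then for every `ε > 0` there is an operator scaling `T'` of `T`, with Kraus
operators `B·Aᵢ·C` for invertible `B, C`, such that `ds(T') ≤ ε`. -/
theorem exists_scaling_ds_le {n1 n2 m : ℕ} (hn1 : 0 < n1) (hn2 : 0 < n2)
    (A : Fin m → Matrix (Fin n2) (Fin n1) ℂ)
    (hcap : 0 < capacity (fun X : Matrix (Fin n1) (Fin n1) ℂ => ∑ i, A i * X * (A i)ᴴ))
    (ε : ℝ) (hε : 0 < ε) :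
    ∃ (Bm : Matrix (Fin n2) (Fin n2) ℂ) (Cm : Matrix (Fin n1) (Fin n1) ℂ),
      IsUnit Bm ∧ IsUnit Cm ∧ dsDist (fun i => Bm * A i * Cm) ≤ ε := by
  classical
  set T : Matrix (Fin n1) (Fin n1) ℂ → Matrix (Fin n2) (Fin n2) ℂ :=
    fun X => ∑ i, A i * X * (A i)ᴴ with hTdef
  set c2 : ℂ := (n2 : ℂ) / (n1 : ℂ) with hc2def
  set S : Set ℝ := { r : ℝ | ∃ X : Matrix (Fin n1) (Fin n1) ℂ, X.PosDef ∧ X.det = 1 ∧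
    r = ((c2 • T X).det).re } with hSdef
  have hn1r : (0:ℝ) < n1 := by exact_mod_cast hn1
  have hn2r : (0:ℝ) < n2 := by exact_mod_cast hn2
  have hn1c : (n1:ℂ) ≠ 0 := by exact_mod_cast hn1.ne'
  have hn2c : (n2:ℂ) ≠ 0 := by exact_mod_cast hn2.ne'
  have hc2r : c2 = (((n2:ℝ)/(n1:ℝ) : ℝ) : ℂ) := by rw [hc2def]; push_cast; ring
  have hc2rpos : (0:ℝ) < (n2:ℝ)/(n1:ℝ) := by positivity
  have hc2ne : c2 ≠ 0 := by rw [hc2r]; exact_mod_cast (ne_of_gt hc2rpos)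
  have hcapS : capacity T = sInf S := by
    unfold capacity
    simp only [Fintype.card_fin]
    rfl
  set cap : ℝ := sInf S with hcapdef
  rw [hcapS] at hcap
  -- linearity of T
  have hTadd : ∀ X Y, T (X + Y) = T X + T Y := by
    intro X Y
    show (∑ i, A i * (X + Y) * (A i)ᴴ) = (∑ i, A i * X * (A i)ᴴ) + ∑ i, A i * Y * (A i)ᴴ
    rw [← Finset.sum_add_distrib]
    exact Finset.sum_congr rfl fun i _ => by rw [Matrix.mul_add, Matrix.add_mul]
  have hTsmul : ∀ (z : ℂ) X, T (z • X) = z • T X := by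
    intro z X
    show (∑ i, A i * (z • X) * (A i)ᴴ) = z • ∑ i, A i * X * (A i)ᴴ
    rw [Finset.smul_sum]
    exact Finset.sum_congr rfl fun i _ => by rw [Matrix.mul_smul, Matrix.smul_mul]
  have hTpsd : ∀ X : Matrix (Fin n1) (Fin n1) ℂ, X.PosSemidef → (T X).PosSemidef := by
    intro X hX
    show (∑ i, A i * X * (A i)ᴴ).PosSemidef
    have key : ∀ s : Finset (Fin m), (∑ i ∈ s, A i * X * (A i)ᴴ).PosSemidef := by
      intro s
      induction s using Finset.induction_on with
      | empty => simpa using Matrix.PosSemidef.zero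
      | insert _ _ h ih =>
        rw [Finset.sum_insert h]
        exact (hX.mul_mul_conjTranspose_same _).add ih
    exact key _
  -- nonemptiness and boundedness
  have hSne : S.Nonempty := by
    by_contra h
    rw [Set.not_nonempty_iff_eq_empty] at h
    rw [hcapdef, h, Real.sInf_empty] at hcap
    exact lt_irrefl _ hcap
  have hbdd : BddBelow S := by
    by_contra h
    rw [hcapdef, Real.sInf_of_not_bddBelow h] at hcap
    exact lt_irrefl _ hcap
  have hlb : ∀ r ∈ S, cap ≤ r := fun r hr => csInf_le hbdd hr
  -- no common kernel
  have hnck : ∀ v : Fin n1 → ℂ, (∀ i, A i *ᵥ v = 0) → v = 0 := by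
    intro v hv
    by_contra hvne
    obtain ⟨r0, X, hX, hXdet, hr0⟩ := hSne
    have hXunit : IsUnit X.det := by rw [hXdet]; exact isUnit_one
    set w : Matrix (Fin n1) (Fin n1) ℂ := Matrix.replicateCol Unit v * Matrix.replicateRow Unit (star v) with hwdef
    have hwpsd : w.PosSemidef := by
      rw [hwdef, ← Matrix.conjTranspose_replicateCol]
      exact Matrix.posSemidef_self_mul_conjTranspose _
    have hAw : ∀ i, A i * w = 0 := by
      intro i
      rw [hwdef, ← Matrix.mul_assoc, ← Matrix.replicateCol_mulVec, hv i, Matrix.replicateCol_zero, Matrix.zero_mul]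
    have hXinv : X⁻¹.PosDef := hX.inv
    have hqpos : 0 < star v ⬝ᵥ (X⁻¹ *ᵥ v) := hXinv.dotProduct_mulVec_pos hvne
    set q : ℂ := star v ⬝ᵥ (X⁻¹ *ᵥ v) with hqdef
    set qr : ℝ := q.re with hqrdef
    have hqrpos : 0 < qr := (Complex.lt_def.mp hqpos).1
    have hqeq : q = (qr:ℂ) := by
      apply Complex.ext
      · simp [hqrdef]
      · simp [← (Complex.lt_def.mp hqpos).2]
    set F : ℝ := ((c2 • T X).det).re with hFdef
    have hF : cap ≤ F := hlb _ ⟨X, hX, hXdet, rfl⟩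
    have hFpos : 0 < F := lt_of_lt_of_le hcap hF
    set R : ℝ := max 1 ((F/cap) ^ ((n1:ℝ)/(n2:ℝ))) with hRdef
    have hR1 : (1:ℝ) ≤ R := le_max_left _ _
    have hRpos : (0:ℝ) < R := lt_of_lt_of_le one_pos hR1
    set t : ℝ := R / qr with htdef
    have ht : 0 < t := div_pos hRpos hqrpos
    have htq : t * qr = R := div_mul_cancel₀ _ (ne_of_gt hqrpos)
    set Z := X + (t:ℂ) • w with hZdef
    have hZdet : Z.det = ((1 + t*qr : ℝ) : ℂ) := by
      have h1 : (t:ℂ) • w = Matrix.replicateCol Unit ((t:ℂ) • v) * Matrix.replicateRow Unit (star v) := by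
        rw [hwdef, Matrix.replicateCol_smul, Matrix.smul_mul]
      rw [hZdef, h1, Matrix.det_add_replicateCol_mul_replicateRow hXunit, hXdet, one_mul, Matrix.det_unique]
      rw [Matrix.add_apply, Matrix.one_apply_eq]
      rw [Matrix.mul_assoc, ← Matrix.replicateCol_mulVec, Matrix.replicateRow_mul_replicateCol_apply]
      rw [Matrix.mulVec_smul, dotProduct_smul, smul_eq_mul, ← hqdef, hqeq]
      push_cast
      ring
    have hZpsd : Z.PosSemidef := hX.posSemidef.add (psd_smul_real hwpsd ht.le)
    have h1tq : (0:ℝ) < 1 + t*qr := by rw [htq]; linarith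
    set s : ℝ := (1 + t*qr) ^ (-(1/(n1:ℝ))) with hsdef
    have hspos : 0 < s := Real.rpow_pos_of_pos h1tq _
    set Y := (s:ℂ) • Z with hYdef
    have hsn1 : s ^ (n1:ℕ) * (1+t*qr) = 1 := by
      rw [hsdef, ← Real.rpow_natCast ((1+t*qr) ^ (-(1/(n1:ℝ)))) n1, ← Real.rpow_mul h1tq.le]
      have he : (-(1/(n1:ℝ))) * (n1:ℝ) = -1 := by field_simp
      rw [he, Real.rpow_neg_one]
      exact inv_mul_cancel₀ (ne_of_gt h1tq)
    have hYdet : Y.det = 1 := by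
      rw [hYdef, Matrix.det_smul, hZdet, Fintype.card_fin,
        show ((s:ℂ))^(n1:ℕ) = ((s^(n1:ℕ) : ℝ):ℂ) by push_cast; rfl,
        ← Complex.ofReal_mul, hsn1, Complex.ofReal_one]
    have hYpos : Y.PosDef :=
      posDef_of_psd_det (psd_smul_real hZpsd hspos.le) (by rw [hYdet]; exact one_ne_zero)
    have hTZ : T Z = T X := by
      rw [hZdef, hTadd, hTsmul]
      have hTw : T w = 0 := by
        show (∑ i, A i * w * (A i)ᴴ) = 0
        apply Finset.sum_eq_zero
        intro i _
        rw [hAw i, Matrix.zero_mul]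
      rw [hTw, smul_zero, add_zero]
    have hmem : ((c2 • T Y).det).re ∈ S := ⟨Y, hYpos, hYdet, rfl⟩
    have hval : ((c2 • T Y).det).re = s^(n2:ℕ) * F := by
      rw [hYdef, hTsmul, hTZ, smul_comm c2 ((s:ℂ) : ℂ) (T X), Matrix.det_smul, Fintype.card_fin,
        show ((s:ℂ))^(n2:ℕ) = ((s^(n2:ℕ) : ℝ):ℂ) by push_cast; rfl,
        Complex.re_ofReal_mul, hFdef]
    have hcontra : s^(n2:ℕ) * F < cap := by
      have hs2 : s^(n2:ℕ) = (1+R) ^ (-((n2:ℝ)/(n1:ℝ))) := by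
        rw [hsdef, htq, ← Real.rpow_natCast ((1+R) ^ (-(1/(n1:ℝ)))) n2, ← Real.rpow_mul (by linarith)]
        congr 1
        field_simp
      have hkey : F/cap < (1+R) ^ ((n2:ℝ)/(n1:ℝ)) := by
        have hx0 : (0:ℝ) ≤ F/cap := le_of_lt (div_pos hFpos hcap)
        have ha : (F/cap) ^ ((n1:ℝ)/(n2:ℝ)) ≤ R := le_max_right _ _
        have e1 : ((F/cap) ^ ((n1:ℝ)/(n2:ℝ))) ^ ((n2:ℝ)/(n1:ℝ)) = F/cap := by
          rw [← Real.rpow_mul hx0, show (n1:ℝ)/(n2:ℝ)*((n2:ℝ)/(n1:ℝ)) = 1 by field_simp,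
            Real.rpow_one]
        have e2 : ((F/cap) ^ ((n1:ℝ)/(n2:ℝ))) ^ ((n2:ℝ)/(n1:ℝ)) ≤ R ^ ((n2:ℝ)/(n1:ℝ)) :=
          Real.rpow_le_rpow (Real.rpow_nonneg hx0 _) ha (by positivity)
        have e3 : R ^ ((n2:ℝ)/(n1:ℝ)) < (1+R) ^ ((n2:ℝ)/(n1:ℝ)) :=
          Real.rpow_lt_rpow (le_of_lt hRpos) (by linarith) (by positivity)
        calc F/cap = ((F/cap) ^ ((n1:ℝ)/(n2:ℝ))) ^ ((n2:ℝ)/(n1:ℝ)) := e1.symm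
        _ ≤ R ^ ((n2:ℝ)/(n1:ℝ)) := e2
        _ < (1+R) ^ ((n2:ℝ)/(n1:ℝ)) := e3
      have hpow : (0:ℝ) < (1+R) ^ ((n2:ℝ)/(n1:ℝ)) := Real.rpow_pos_of_pos (by linarith) _
      rw [hs2, Real.rpow_neg (by linarith : (0:ℝ) ≤ 1+R)]
      rw [inv_mul_lt_iff₀ hpow]
      exact (div_lt_iff₀ hcap).mp hkey
    exact absurd (hlb _ hmem) (not_le.mpr (hval ▸ hcontra))
  -- main construction
  set a : ℝ := ε/(2*(n2:ℝ)) with hadef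
  have hapos : 0 < a := by positivity
  set δ : ℝ := cap * (Real.exp a - 1) with hdeltadef
  have hexp1 : 1 < Real.exp a := by
    rw [← Real.exp_zero]
    exact Real.exp_lt_exp.mpr hapos
  have hδpos : 0 < δ := mul_pos hcap (by linarith)
  obtain ⟨f0, hf0S, hf0lt⟩ := Real.lt_sInf_add_pos hSne hδpos
  have hf0cap : cap ≤ f0 := hlb _ hf0S
  have hf0pos : 0 < f0 := lt_of_lt_of_le hcap hf0cap
  have hf0le : f0 < cap * Real.exp a := by
    rw [← hcapdef] at hf0lt
    rw [hdeltadef] at hf0lt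
    nlinarith
  obtain ⟨X, hX, hXdet, hf0eq⟩ := hf0S
  set G : Matrix (Fin n2) (Fin n2) ℂ := c2 • T X with hGdef
  have hGpsd : G.PosSemidef := by
    rw [hGdef, hc2r]
    exact psd_smul_real (hTpsd X hX.posSemidef) (le_of_lt hc2rpos)
  have hGdet : G.det = ((f0:ℝ):ℂ) := by
    rw [hf0eq]
    exact (psd_det_real hGpsd).1
  have hGdetne : G.det ≠ 0 := by
    rw [hGdet]
    exact_mod_cast (ne_of_gt hf0pos)
  set W : Matrix (Fin n2) (Fin n2) ℂ := hGpsd.sqrt with hWdef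
  have hWpsd : W.PosSemidef := hGpsd.posSemidef_sqrt
  have hWmul : W * W = G := hGpsd.sqrt_mul_self
  have hWdet2 : W.det * W.det = G.det := by rw [← Matrix.det_mul, hWmul]
  have hWdetne : W.det ≠ 0 := by
    intro h
    exact hGdetne (by rw [← hWdet2, h, mul_zero])
  have hWunit : IsUnit W.det := Ne.isUnit hWdetne
  set B : Matrix (Fin n2) (Fin n2) ℂ := W⁻¹ with hBdef
  have hBunit : IsUnit B := by
    rw [Matrix.isUnit_iff_isUnit_det, hBdef, Matrix.det_nonsing_inv, isUnit_ringInverse]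
    exact hWunit
  have hBH : Bᴴ = B := by rw [hBdef, Matrix.conjTranspose_nonsing_inv, hWpsd.1]
  have hBGB : B * G * Bᴴ = 1 := by
    rw [hBH, hBdef, ← hWmul, ← Matrix.mul_assoc W⁻¹ W W, Matrix.nonsing_inv_mul _ hWunit,
      Matrix.one_mul, Matrix.mul_nonsing_inv _ hWunit]
  have hBTX : B * T X * Bᴴ = c2⁻¹ • 1 := by
    have hTX : T X = c2⁻¹ • G := by rw [hGdef, smul_smul, inv_mul_cancel₀ hc2ne, one_smul]
    rw [hTX, Matrix.mul_smul, Matrix.smul_mul, hBGB]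
  set S1 : Matrix (Fin n1) (Fin n1) ℂ := ∑ i, (B * A i)ᴴ * (B * A i) with hS1def
  have hS1psd : S1.PosSemidef := by
    rw [hS1def]
    have key : ∀ s : Finset (Fin m), (∑ i ∈ s, (B * A i)ᴴ * (B * A i)).PosSemidef := by
      intro s
      induction s using Finset.induction_on with
      | empty => simpa using Matrix.PosSemidef.zero
      | insert _ _ h ih =>
        rw [Finset.sum_insert h]
        exact (Matrix.posSemidef_conjTranspose_mul_self _).add ih
    exact key _
  have hS1pd : S1.PosDef := by
    refine Matrix.posDef_iff_dotProduct_mulVec.mpr ⟨hS1psd.1, fun x hx => lt_of_le_of_ne (hS1psd.dotProduct_mulVec_nonneg x) ?_⟩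
    intro heq
    have hsum0 : ∑ i, star x ⬝ᵥ (((B * A i)ᴴ * (B * A i)) *ᵥ x) = 0 := by
      rw [← dot_sum', ← sum_mulVec', ← hS1def, ← heq]
    have hterm := (Finset.sum_eq_zero_iff_of_nonneg
      (fun i _ => (Matrix.posSemidef_conjTranspose_mul_self (B * A i)).dotProduct_mulVec_nonneg x)).mp hsum0
    have hA0 : ∀ i, A i *ᵥ x = 0 := by
      intro i
      have h := hterm i (Finset.mem_univ i)
      rw [← Matrix.mulVec_mulVec, Matrix.dotProduct_mulVec, ← Matrix.star_mulVec] at h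
      have hBA : (B * A i) *ᵥ x = 0 := dotProduct_star_self_eq_zero.mp h
      rw [hBdef, ← Matrix.mulVec_mulVec] at hBA
      have h2 : W *ᵥ (W⁻¹ *ᵥ (A i *ᵥ x)) = 0 := by rw [hBA, Matrix.mulVec_zero]
      rw [Matrix.mulVec_mulVec, Matrix.mul_nonsing_inv _ hWunit, Matrix.one_mulVec] at h2
      exact h2
    exact hx (hnck x hA0)
  have hS1detpos : 0 < (S1.det).re ∧ S1.det = (((S1.det).re : ℝ) : ℂ) := by
    have h := hS1pd.det_pos
    exact ⟨(Complex.lt_def.mp h).1, by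
      apply Complex.ext
      · simp
      · simp [← (Complex.lt_def.mp h).2]⟩
  set e : ℝ := (S1.det).re with hedef
  have hepos : 0 < e := hS1detpos.1
  set V : Matrix (Fin n1) (Fin n1) ℂ := hS1psd.sqrt with hVdef
  have hVpsd : V.PosSemidef := hS1psd.posSemidef_sqrt
  have hVmul : V * V = S1 := hS1psd.sqrt_mul_self
  have hVdet2 : V.det * V.det = S1.det := by rw [← Matrix.det_mul, hVmul]
  have hVdetne : V.det ≠ 0 := by
    intro h
    have : S1.det = 0 := by rw [← hVdet2, h, mul_zero]
    rw [hS1detpos.2] at this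
    exact (ne_of_gt hepos) (by exact_mod_cast this)
  have hVunit : IsUnit V.det := Ne.isUnit hVdetne
  set C : Matrix (Fin n1) (Fin n1) ℂ := V⁻¹ with hCdef
  have hCunit : IsUnit C := by
    rw [Matrix.isUnit_iff_isUnit_det, hCdef, Matrix.det_nonsing_inv, isUnit_ringInverse]
    exact hVunit
  have hCH : Cᴴ = C := by rw [hCdef, Matrix.conjTranspose_nonsing_inv, hVpsd.1]
  have hCSC : Cᴴ * S1 * C = 1 := by
    rw [hCH, hCdef, ← hVmul, ← Matrix.mul_assoc V⁻¹ V V, Matrix.nonsing_inv_mul _ hVunit,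
      Matrix.one_mul, Matrix.mul_nonsing_inv _ hVunit]
  have hCC : C * Cᴴ = S1⁻¹ := by
    rw [hCH, hCdef, ← Matrix.mul_inv_rev, hVmul]
  have hmarg2 : ∑ i, (B * A i * C)ᴴ * (B * A i * C) = 1 := by
    have h1 : ∀ i : Fin m, (B * A i * C)ᴴ * (B * A i * C)
        = Cᴴ * ((B * A i)ᴴ * (B * A i)) * C := by
      intro i
      simp only [Matrix.conjTranspose_mul, Matrix.mul_assoc]
    rw [Finset.sum_congr rfl (fun i _ => h1 i), ← Finset.sum_mul, ← Finset.mul_sum, ← hS1def,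
      hCSC]
  set P : Matrix (Fin n2) (Fin n2) ℂ := ∑ i, (B * A i * C) * (B * A i * C)ᴴ with hPdef
  have hP : P = B * T (S1⁻¹) * Bᴴ := by
    have h1 : ∀ i : Fin m, (B * A i * C) * (B * A i * C)ᴴ
        = B * (A i * (C * Cᴴ) * (A i)ᴴ) * Bᴴ := by
      intro i
      simp only [Matrix.conjTranspose_mul, Matrix.mul_assoc]
    have h2 : T (S1⁻¹) = ∑ i, A i * S1⁻¹ * (A i)ᴴ := rfl
    rw [hPdef, Finset.sum_congr rfl (fun i _ => h1 i), ← Finset.sum_mul, ← Finset.mul_sum,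
      h2, ← hCC]
  have hPtrace : P.trace = (n1:ℂ) := by
    rw [hPdef, Matrix.trace_sum,
      Finset.sum_congr rfl (fun i _ => Matrix.trace_mul_comm (B * A i * C) ((B * A i * C)ᴴ)),
      ← Matrix.trace_sum, hmarg2, Matrix.trace_one, Fintype.card_fin]
  set Q : Matrix (Fin n2) (Fin n2) ℂ := c2 • P with hQdef
  have hPpsd : P.PosSemidef := by
    rw [hP]
    exact (hTpsd (S1⁻¹) (hS1pd.inv.posSemidef)).mul_mul_conjTranspose_same B
  have hQpsd : Q.PosSemidef := by
    rw [hQdef, hc2r]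
    exact psd_smul_real hPpsd hc2rpos.le
  have hQherm : Q.IsHermitian := hQpsd.1
  have hQtrace : Q.trace = (n2:ℂ) := by
    rw [hQdef, Matrix.trace_smul, hPtrace, hc2def, smul_eq_mul]
    field_simp
  have hsumμ : ∑ i, hQherm.eigenvalues i = (n2:ℝ) := by
    have h := herm_trace_eq hQherm
    rw [hQtrace] at h
    exact_mod_cast h.symm
  have hμnn : ∀ i, 0 ≤ hQherm.eigenvalues i := hQpsd.eigenvalues_nonneg
  have hprodμ : Q.det = ((∏ i, hQherm.eigenvalues i : ℝ) : ℂ) := by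
    rw [hQherm.det_eq_prod_eigenvalues]
    push_cast
    rfl
  -- e ≤ 1
  have he1 : e ≤ 1 := by
    set Xs := hX.posSemidef.sqrt with hXsdef
    have hXspsd : Xs.PosSemidef := hX.posSemidef.posSemidef_sqrt
    have hXsmul : Xs * Xs = X := hX.posSemidef.sqrt_mul_self
    set M' : Matrix (Fin n1) (Fin n1) ℂ := Xs * S1 * Xs with hM'def
    have hM'psd : M'.PosSemidef := by
      rw [hM'def]
      have h := hS1psd.mul_mul_conjTranspose_same Xs
      rwa [hXspsd.1] at h
    have hM'trace : M'.trace = (n1:ℂ) := by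
      rw [hM'def, Matrix.trace_mul_cycle, hXsmul, hS1def, Finset.mul_sum, Matrix.trace_sum]
      have h1 : ∀ i ∈ Finset.univ, (X * ((B * A i)ᴴ * (B * A i))).trace
          = (B * (A i * X * (A i)ᴴ) * Bᴴ).trace := by
        intro i _
        rw [Matrix.trace_mul_comm, Matrix.mul_assoc, Matrix.trace_mul_comm]
        congr 1
        simp only [Matrix.conjTranspose_mul, Matrix.mul_assoc]
      rw [Finset.sum_congr rfl h1, ← Matrix.trace_sum, ← Finset.sum_mul, ← Finset.mul_sum,
        show (∑ i, A i * X * (A i)ᴴ) = T X from rfl, hBTX, Matrix.trace_smul,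
        Matrix.trace_one, Fintype.card_fin, smul_eq_mul, hc2def]
      field_simp
    have hsuml : ∑ i, hM'psd.1.eigenvalues i = (n1:ℝ) := by
      have h := herm_trace_eq hM'psd.1
      rw [hM'trace] at h
      exact_mod_cast h.symm
    have hdetM' : M'.det = ((∏ i, hM'psd.1.eigenvalues i : ℝ) : ℂ) := by
      rw [hM'psd.1.det_eq_prod_eigenvalues]
      push_cast
      rfl
    have hdetM'2 : M'.det = S1.det := by
      rw [hM'def, Matrix.det_mul, Matrix.det_mul]
      have hXX : Xs.det * Xs.det = X.det := by rw [← Matrix.det_mul, hXsmul]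
      rw [hXdet] at hXX
      calc Xs.det * S1.det * Xs.det = Xs.det * Xs.det * S1.det := by ring
      _ = S1.det := by rw [hXX, one_mul]
    have heprod : e = ∏ i, hM'psd.1.eigenvalues i := by
      have h := hdetM'.symm.trans hdetM'2
      rw [hS1detpos.2] at h
      have h2 : (∏ i, hM'psd.1.eigenvalues i) = e := by exact_mod_cast h
      exact h2.symm
    rw [heprod]
    exact prod_le_one_of_sum_le (Fintype.card_fin n1) _ (hM'psd.eigenvalues_nonneg)
      (by rw [hsuml])
  -- capacity lower bound for Er
  set E : Matrix (Fin n2) (Fin n2) ℂ := c2 • T (S1⁻¹) with hEdef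
  have hEpsd : E.PosSemidef := by
    rw [hEdef, hc2r]
    exact psd_smul_real (hTpsd _ hS1pd.inv.posSemidef) hc2rpos.le
  set Er : ℝ := (E.det).re with hErdef
  have hEr : E.det = (Er:ℂ) := (psd_det_real hEpsd).1
  have hErnn : 0 ≤ Er := (psd_det_real hEpsd).2
  have hS1inv_det : (S1⁻¹).det = ((e⁻¹:ℝ):ℂ) := by
    rw [Matrix.det_nonsing_inv, Ring.inverse_eq_inv', hS1detpos.2, ← Complex.ofReal_inv]
  set k : ℝ := e ^ ((1:ℝ)/(n1:ℝ)) with hkdef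
  have hkpos : 0 < k := Real.rpow_pos_of_pos hepos _
  have hkn1 : k ^ (n1:ℕ) = e := by
    rw [hkdef, ← Real.rpow_natCast (e ^ ((1:ℝ)/(n1:ℝ))) n1, ← Real.rpow_mul hepos.le,
      show (1:ℝ)/(n1:ℝ) * (n1:ℝ) = 1 by field_simp, Real.rpow_one]
  set Y0 : Matrix (Fin n1) (Fin n1) ℂ := ((k:ℝ):ℂ) • S1⁻¹ with hY0def
  have hY0det : Y0.det = 1 := by
    rw [hY0def, Matrix.det_smul, Fintype.card_fin, hS1inv_det,
      show ((k:ℂ))^(n1:ℕ) = ((k^(n1:ℕ) : ℝ):ℂ) by push_cast; rfl, ← Complex.ofReal_mul]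
    have h : (k^(n1:ℕ) : ℝ) * e⁻¹ = 1 := by
      rw [hkn1]
      exact mul_inv_cancel₀ (ne_of_gt hepos)
    rw [h, Complex.ofReal_one]
  have hY0pos : Y0.PosDef :=
    posDef_of_psd_det (by rw [hY0def]; exact psd_smul_real hS1pd.inv.posSemidef hkpos.le)
      (by rw [hY0det]; exact one_ne_zero)
  have hmem0 : ((c2 • T Y0).det).re ∈ S := ⟨Y0, hY0pos, hY0det, rfl⟩
  have hval0 : ((c2 • T Y0).det).re = k^(n2:ℕ) * Er := by
    rw [hY0def, hTsmul, smul_comm c2 ((k:ℂ)) (T (S1⁻¹)), ← hEdef, Matrix.det_smul,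
      Fintype.card_fin, show ((k:ℂ))^(n2:ℕ) = ((k^(n2:ℕ) : ℝ):ℂ) by push_cast; rfl,
      Complex.re_ofReal_mul, hErdef]
  have hcapEr : cap ≤ k^(n2:ℕ) * Er := hval0 ▸ hlb _ hmem0
  have hk1 : k ≤ 1 := Real.rpow_le_one hepos.le he1 (by positivity)
  have hkn2le : k^(n2:ℕ) ≤ 1 := pow_le_one₀ hkpos.le hk1
  have hErcap : cap ≤ Er := le_trans hcapEr (by nlinarith)
  -- det Q = Er / f0
  have hBdet : B.det * W.det = 1 := by
    rw [hBdef, ← Matrix.det_mul, Matrix.nonsing_inv_mul _ hWunit, Matrix.det_one]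
  set wr : ℝ := (W.det).re with hwrdef
  have hWdetre : W.det = (wr:ℂ) := (psd_det_real hWpsd).1
  have hwr2 : wr * wr = f0 := by
    have h := hWdet2
    rw [hWdetre, hGdet, ← Complex.ofReal_mul] at h
    exact_mod_cast h
  have hwrpos : 0 < wr := by
    have hwrnn : 0 ≤ wr := (psd_det_real hWpsd).2
    have hne : wr ≠ 0 := by
      intro h0
      rw [h0, zero_mul] at hwr2
      exact hf0pos.ne' hwr2.symm
    exact lt_of_le_of_ne hwrnn (Ne.symm hne)
  have hwrne : (wr:ℂ) ≠ 0 := by exact_mod_cast ne_of_gt hwrpos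
  have hBdetval : B.det = ((wr⁻¹:ℝ):ℂ) := by
    have h : B.det * (wr:ℂ) = 1 := by rw [← hWdetre]; exact hBdet
    rw [Complex.ofReal_inv]
    field_simp at h ⊢
    linear_combination h
  have hQE : Q = B * E * Bᴴ := by
    rw [hQdef, hP, hEdef, Matrix.mul_smul, Matrix.smul_mul]
  have hdetQval : Q.det = ((wr⁻¹ * Er * wr⁻¹ : ℝ):ℂ) := by
    rw [hQE, Matrix.det_mul, Matrix.det_mul, Matrix.det_conjTranspose, hBdetval, hEr]
    have hstar : star ((wr⁻¹:ℝ):ℂ) = ((wr⁻¹:ℝ):ℂ) := by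
      rw [RCLike.star_def, Complex.conj_ofReal]
    rw [hstar, ← Complex.ofReal_mul, ← Complex.ofReal_mul]
  have hprodEr : ∏ i, hQherm.eigenvalues i = Er / f0 := by
    have h := hprodμ.symm.trans hdetQval
    have h2 : (∏ i, hQherm.eigenvalues i) = wr⁻¹ * Er * wr⁻¹ := by exact_mod_cast h
    rw [h2, ← hwr2]
    field_simp
  -- conclude
  have hprodge : Real.exp (-a) ≤ ∏ i, hQherm.eigenvalues i := by
    rw [hprodEr]
    have h1 : Real.exp (-a) = cap / (cap * Real.exp a) := by
      rw [Real.exp_neg]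
      field_simp
    rw [h1]
    calc cap / (cap * Real.exp a) ≤ cap / f0 := by
          gcongr
    _ ≤ Er / f0 := by gcongr
  have hfinal := sum_sq_le_of_prod_ge (Fintype.card_fin n2) hn2 hQherm.eigenvalues hμnn
    (by rw [hsumμ]) hprodge
  have h2na : 2 * (n2:ℝ) * a = ε := by
    rw [hadef]
    field_simp
  refine ⟨B, C, hBunit, hCunit, ?_⟩
  unfold dsDist
  simp only []
  have hfirst : ((n2:ℂ)/(n1:ℂ)) • (∑ i, (B * A i * C) * (B * A i * C)ᴴ) - 1 = Q - 1 := by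
    rw [← hc2def, ← hPdef, ← hQdef]
  have hsecond : (∑ i, (B * A i * C)ᴴ * (B * A i * C)) - (1 : Matrix (Fin n1) (Fin n1) ℂ)
      = 0 := by
    rw [hmarg2, sub_self]
  rw [hfirst, hsecond]
  have hz : ((0 : Matrix (Fin n1) (Fin n1) ℂ)^2).trace.re = 0 := by
    rw [pow_two, Matrix.zero_mul, Matrix.trace_zero]
    rfl
  rw [hz, trace_sub_one_sq hQherm, add_zero]
  calc ∑ i, (hQherm.eigenvalues i - 1)^2 ≤ 2 * (n2:ℝ) * a := hfinal
  _ = ε := h2na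
end

section
/- Let A ∈ M_n(ℂ) be a Hermitian positive semidefinite matrix with tr(A) = n, and let 0 < ε ≤ 1 be such that tr[(A − I_n)²] ≥ ε. Then det(A) ≤ exp(−ε/6). -/
open Matrix Finset
open scoped ComplexOrder

lemma aux_le_exp (x : ℝ) (hx : 0 ≤ x) : x ≤ Real.exp (2 * (Real.sqrt x - 1)) := by
  have h := Real.add_one_le_exp (Real.sqrt x - 1)
  have h2 : Real.sqrt x ≤ Real.exp (Real.sqrt x - 1) := by linarith
  calc x = Real.sqrt x * Real.sqrt x := (Real.mul_self_sqrt hx).symm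
    _ ≤ Real.exp (Real.sqrt x - 1) * Real.exp (Real.sqrt x - 1) :=
        mul_le_mul h2 h2 (Real.sqrt_nonneg x) (Real.exp_nonneg _)
    _ = Real.exp (2 * (Real.sqrt x - 1)) := by rw [← Real.exp_add]; ring_nf

lemma aux_small (x : ℝ) (hx : 0 ≤ x) (hx2 : x ≤ 2) :
    2 * (Real.sqrt x - 1) ≤ (x - 1) - (x - 1) ^ 2 / 6 := by
  set s := Real.sqrt x with hs
  have hs0 : 0 ≤ s := Real.sqrt_nonneg x
  have hss : s * s = x := Real.mul_self_sqrt hx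
  nlinarith [sq_nonneg (s - 1), sq_nonneg (s*s - 1), sq_nonneg s, sq_nonneg (s+1)]

lemma aux_main {n : ℕ} (μ : Fin n → ℝ) (hpos : ∀ i, 0 ≤ μ i)
    (hsum : ∑ i, μ i = n) (ε : ℝ) (hε1 : ε ≤ 1)
    (hfar : ε ≤ ∑ i, (μ i - 1) ^ 2) :
    ∏ i, μ i ≤ Real.exp (-ε / 6) := by
  by_cases hbig : ∃ j, 2 < μ j
  · obtain ⟨j, hj⟩ := hbig
    have hprod : ∏ i, μ i = μ j * ∏ i ∈ univ.erase j, μ i :=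
      (Finset.mul_prod_erase univ μ (mem_univ j)).symm
    have herase : ∏ i ∈ univ.erase j, μ i ≤ Real.exp (∑ i ∈ univ.erase j, (μ i - 1)) := by
      rw [Real.exp_sum]
      exact Finset.prod_le_prod (fun i _ => hpos i)
        (fun i _ => by have := Real.add_one_le_exp (μ i - 1); linarith)
    have hsum' : ∑ i ∈ univ.erase j, (μ i - 1) = 1 - μ j := by
      have h1 : ∑ i, (μ i - 1) = 0 := by
        rw [Finset.sum_sub_distrib, hsum]; simp
      have h2 : ∑ i, (μ i - 1) = (μ j - 1) + ∑ i ∈ univ.erase j, (μ i - 1) :=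
        (Finset.add_sum_erase univ (fun i => μ i - 1) (mem_univ j)).symm
      linarith
    have hμj : μ j ≤ Real.exp (2 * (Real.sqrt (μ j) - 1)) := aux_le_exp _ (hpos j)
    have hkey : μ j * Real.exp (1 - μ j) ≤ Real.exp (-ε / 6) := by
      have : μ j * Real.exp (1 - μ j) ≤
          Real.exp (2 * (Real.sqrt (μ j) - 1)) * Real.exp (1 - μ j) :=
        mul_le_mul_of_nonneg_right hμj (Real.exp_nonneg _)
      rw [← Real.exp_add] at this
      refine this.trans (Real.exp_le_exp.2 ?_)
      set s := Real.sqrt (μ j) with hs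
      have hs0 : 0 ≤ s := Real.sqrt_nonneg _
      have hss : s * s = μ j := Real.mul_self_sqrt (hpos j)
      have hs2 : 2 ≤ s * s := by linarith
      nlinarith [sq_nonneg (12*s - 17)]
    calc ∏ i, μ i = μ j * ∏ i ∈ univ.erase j, μ i := hprod
      _ ≤ μ j * Real.exp (∑ i ∈ univ.erase j, (μ i - 1)) :=
          mul_le_mul_of_nonneg_left herase (le_of_lt (lt_trans two_pos hj))
      _ = μ j * Real.exp (1 - μ j) := by rw [hsum']
      _ ≤ Real.exp (-ε / 6) := hkey
  · push_neg at hbig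
    have hstep : ∀ i, μ i ≤ Real.exp ((μ i - 1) - (μ i - 1) ^ 2 / 6) := fun i =>
      (aux_le_exp _ (hpos i)).trans (Real.exp_le_exp.2 (aux_small _ (hpos i) (hbig i)))
    calc ∏ i, μ i ≤ ∏ i, Real.exp ((μ i - 1) - (μ i - 1) ^ 2 / 6) :=
          Finset.prod_le_prod (fun i _ => hpos i) (fun i _ => hstep i)
      _ = Real.exp (∑ i, ((μ i - 1) - (μ i - 1) ^ 2 / 6)) := (Real.exp_sum _ _).symm
      _ ≤ Real.exp (-ε / 6) := by
          apply Real.exp_le_exp.2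
          have h1 : ∑ i, ((μ i - 1) - (μ i - 1) ^ 2 / 6)
              = (∑ i, (μ i - 1)) - (∑ i, (μ i - 1) ^ 2) / 6 := by
            rw [Finset.sum_sub_distrib, ← Finset.sum_div]
          have h2 : ∑ i, (μ i - 1) = 0 := by
            rw [Finset.sum_sub_distrib, hsum]; simp
          rw [h1, h2]; linarith

/-- (Robust AM–GM.)  If `A ∈ M_n(ℂ)` is Hermitian positive semidefinite
with `tr A = n`, and `0 < ε ≤ 1` satisfies `tr[(A − I)²] ≥ ε`, then
`det A ≤ exp(−ε/6)`. -/
theorem det_le_exp_of_far_from_id {n : ℕ} (A : Matrix (Fin n) (Fin n) ℂ)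
    (hA : A.PosSemidef) (htr : A.trace = (n : ℂ))
    (ε : ℝ) (hε0 : 0 < ε) (hε1 : ε ≤ 1)
    (hfar : ε ≤ (Matrix.trace ((A - 1) ^ 2)).re) :
    A.det.re ≤ Real.exp (-ε / 6) := by
  have hH := hA.1
  set μ : Fin n → ℝ := hH.eigenvalues with hμ
  set U : Matrix (Fin n) (Fin n) ℂ := (hH.eigenvectorUnitary : Matrix (Fin n) (Fin n) ℂ) with hUdef
  have hU1 : star U * U = 1 := Unitary.coe_star_mul_self _
  have hU2 : U * star U = 1 := Matrix.mem_unitaryGroup_iff.mp hH.eigenvectorUnitary.2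
  have hdiag : star U * A * U = diagonal (fun i => (μ i : ℂ)) := by
    have := hH.conjStarAlgAut_star_eigenvectorUnitary
    rw [Unitary.conjStarAlgAut_star_apply] at this
    exact this
  have htrA : A.trace = ∑ i, (μ i : ℂ) := by
    have : (star U * A * U).trace = A.trace := by
      rw [Matrix.trace_mul_cycle, hU2, one_mul]
    rw [← this, hdiag, Matrix.trace_diagonal]
  have h1 : star U * (A - 1) * U = diagonal (fun i => (μ i : ℂ) - 1) := by
    have : star U * (A - 1) * U = star U * A * U - star U * U := by
      noncomm_ring
    rw [this, hdiag, hU1]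
    ext i k
    by_cases h : i = k <;> simp [Matrix.diagonal, Matrix.one_apply, h]
  have h2 : star U * ((A - 1) ^ 2) * U = diagonal (fun i => ((μ i : ℂ) - 1) ^ 2) := by
    have e : star U * ((A - 1) ^ 2) * U = (star U * (A - 1) * U) * (star U * (A - 1) * U) := by
      have : (star U * (A - 1) * U) * (star U * (A - 1) * U)
          = star U * ((A-1) * (U * star U) * (A-1)) * U := by noncomm_ring
      rw [this, hU2, mul_one, ← sq]
    rw [e, h1, Matrix.diagonal_mul_diagonal]
    exact congrArg diagonal (funext fun i => by ring)
  have htrB : (Matrix.trace ((A - 1) ^ 2)).re = ∑ i, (μ i - 1) ^ 2 := by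
    have : (star U * ((A-1)^2) * U).trace = ((A-1)^2).trace := by
      rw [Matrix.trace_mul_cycle, hU2, one_mul]
    rw [← this, h2, Matrix.trace_diagonal]
    have : ∀ i : Fin n, ((μ i : ℂ) - 1) ^ 2 = (((μ i - 1) ^ 2 : ℝ) : ℂ) := by
      intro i; push_cast; ring
    simp_rw [this, ← Complex.ofReal_sum, Complex.ofReal_re]
  have hdet : A.det.re = ∏ i, μ i := by
    rw [hH.det_eq_prod_eigenvalues]
    norm_cast
  have hsum : ∑ i, μ i = n := by
    have := htrA.symm.trans htr
    rw [← Complex.ofReal_sum] at this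
    exact_mod_cast this
  rw [hdet]
  exact aux_main μ (fun i => hA.eigenvalues_nonneg i) hsum ε hε1 (htrB ▸ hfar)
end
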